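/- With the notations of the Cartesian product setting and p ∈ [0,1] with λ, λ' > 0, W₁(μ_{(x₁,y₁)}^p, μ_{(x₂,y₂)}^p) ≤ λ'·W₁(μ_{x₁}^{p/λ'}, μ_{x₂}^{p/λ'}) + (1−λ')·d(x₁,x₂) + λ·W₁(μ_{y₁}^{p/λ}, μ_{y₂}^{p/λ}) + (1−λ)·d(y₁,y₂), where λ = (p·D_G + D_H)/(D_G + D_H) and λ' = (D_G + p·D_H)/(D_G + D_H). -/

import Mathlib

open scoped BigOperators

namespace OllivierLong

variable {V : Type*}

/-- A finitely supported probability distribution on `V`. -/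
def IsProb (μ : V → ℝ) : Prop :=
  (∀ v, 0 ≤ μ v) ∧ (Function.support μ).Finite ∧ ∑ᶠ v, μ v = 1

/-- A coupling (transport plan) between two distributions. -/
def IsCoupling (μ₁ μ₂ : V → ℝ) (π : V → V → ℝ) : Prop :=
  (∀ x y, 0 ≤ π x y) ∧ (∀ x, ∑ᶠ y, π x y = μ₁ x) ∧ (∀ y, ∑ᶠ x, π x y = μ₂ y)

/-- The 1-Wasserstein distance w.r.t. the combinatorial graph distance. -/
noncomputable def W1 (G : SimpleGraph V) (μ₁ μ₂ : V → ℝ) : ℝ :=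
  sInf {r | ∃ π, IsCoupling μ₁ μ₂ π ∧ r = ∑ᶠ x, ∑ᶠ y, (G.dist x y : ℝ) * π x y}

/-- A real valued function is 1-Lipschitz w.r.t. the graph distance. -/
def Lip (G : SimpleGraph V) (φ : V → ℝ) : Prop :=
  ∀ u v, |φ u - φ v| ≤ G.dist u v

/-- An integer valued function is 1-Lipschitz w.r.t. the graph distance. -/
def IntLip (G : SimpleGraph V) (φ : V → ℤ) : Prop :=
  ∀ u v, |φ u - φ v| ≤ (G.dist u v : ℤ)

open Classical in
/-- The lazy random walk measure with idleness `p` at `x`. -/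
noncomputable def mu (G : SimpleGraph V) [G.LocallyFinite] (p : ℝ) (x : V) : V → ℝ :=
  fun z => if z = x then p else if G.Adj x z then (1 - p) / (G.degree x) else 0

/-- The `p`-Ollivier-Ricci curvature. -/
noncomputable def kappa (G : SimpleGraph V) [G.LocallyFinite] (p : ℝ) (x y : V) : ℝ :=
  1 - W1 G (mu G p x) (mu G p y) / (G.dist x y)

/-- `K` is the Lin–Lu–Yau curvature of the pair `(x, y)`:
the limit of `κ_p(x,y)/(1-p)` as `p → 1⁻`. -/
def IsLLY (G : SimpleGraph V) [G.LocallyFinite] (x y : V) (K : ℝ) : Prop :=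
  Filter.Tendsto (fun p => kappa G p x y / (1 - p)) (nhdsWithin 1 (Set.Iio 1)) (nhds K)


open Function

/-! ### finsum helpers -/

lemma finsum_eq_finset_sum (f : V → ℝ) (s : Finset V) (h : ∀ x, f x ≠ 0 → x ∈ s) :
    ∑ᶠ x, f x = ∑ x ∈ s, f x :=
  finsum_eq_sum_of_support_subset f fun x hx => Finset.mem_coe.mpr (h x hx)

lemma all_zero_of_finsum_zero {f : V → ℝ} (hfin : (support f).Finite)
    (h0 : ∀ x, 0 ≤ f x) (hs : ∑ᶠ x, f x = 0) (x : V) : f x = 0 := by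
  by_contra hx
  rw [finsum_eq_finset_sum f hfin.toFinset (fun y hy => hfin.mem_toFinset.mpr hy)] at hs
  exact hx ((Finset.sum_eq_zero_iff_of_nonneg (fun i _ => h0 i)).mp hs x
    (hfin.mem_toFinset.mpr hx))

lemma sum_ite_ne {α : Type*} [DecidableEq α] (s : Finset α) (c : α) (hc : c ∈ s) (f : α → ℝ) :
    ∑ x ∈ s, (if x = c then 0 else f x) = ∑ x ∈ s, f x - f c := by
  have h1 : ∀ x ∈ s, f x = (if x = c then 0 else f x) + (if x = c then f x else 0) := by
    intro x _; by_cases h : x = c <;> simp [h]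
  have h2 : ∑ x ∈ s, f x
      = ∑ x ∈ s, (if x = c then 0 else f x) + ∑ x ∈ s, (if x = c then f x else 0) := by
    rw [← Finset.sum_add_distrib]; exact Finset.sum_congr rfl h1
  rw [Finset.sum_ite_eq' s c f, if_pos hc] at h2
  linarith

lemma sum_if_const {α : Type*} {P : Prop} [Decidable P] (s : Finset α) (f : α → ℝ) :
    ∑ x ∈ s, (if P then f x else 0) = if P then ∑ x ∈ s, f x else 0 := by
  split <;> simp

lemma finsum_dist_mul_zero {G : SimpleGraph V} (hconn : G.Connected) {f : V → ℝ}
    (h0 : ∀ v, 0 ≤ f v) (hs : ∑ᶠ v, f v = 0) (u : V) :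
    ∑ᶠ v, (G.dist u v : ℝ) * f v = 0 := by
  by_cases hfin : (support f).Finite
  · have hz := all_zero_of_finsum_zero hfin h0 hs
    have : (fun v => (G.dist u v : ℝ) * f v) = fun _ => (0:ℝ) := by
      funext v; rw [hz v, mul_zero]
    rw [this, finsum_zero]
  · have hinf : (support f).Infinite := hfin
    apply finsum_of_infinite_support
    apply Set.Infinite.mono _ (hinf.diff (Set.finite_singleton u))
    intro v hv
    obtain ⟨hv1, hv2⟩ := hv
    have hne : v ≠ u := by simpa using hv2
    have hd : (0:ℝ) < G.dist u v := by
      exact_mod_cast hconn.pos_dist_of_ne (Ne.symm hne)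
    simp only [mem_support] at hv1 ⊢
    exact mul_ne_zero (ne_of_gt hd) hv1

/-! ### mu lemmas -/

section Mu

variable (G : SimpleGraph V) [G.LocallyFinite]

lemma mu_self (p : ℝ) (x : V) : mu G p x x = p := by simp [mu]

lemma mu_adj {p : ℝ} {x z : V} (h : G.Adj x z) : mu G p x z = (1-p)/(G.degree x) := by
  have hne : z ≠ x := fun e => G.irrefl (e ▸ h)
  simp [mu, hne, h]

lemma mu_eq_zero {p : ℝ} {x z : V} (h1 : z ≠ x) (h2 : ¬ G.Adj x z) : mu G p x z = 0 := by
  simp [mu, h1, h2]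

lemma mu_nonneg {p : ℝ} (h0 : 0 ≤ p) (h1 : p ≤ 1) (x z : V) : 0 ≤ mu G p x z := by
  unfold mu
  split
  · exact h0
  split
  · exact div_nonneg (by linarith) (Nat.cast_nonneg _)
  · exact le_refl _

lemma mu_support' {p : ℝ} {x z : V} (hz : mu G p x z ≠ 0) : z = x ∨ G.Adj x z := by
  unfold mu at hz
  by_cases h : z = x
  · exact Or.inl h
  · rw [if_neg h] at hz
    by_cases h2 : G.Adj x z
    · exact Or.inr h2
    · rw [if_neg h2] at hz; exact absurd rfl hz

lemma mu_support_finite (p : ℝ) (x : V) : (support (mu G p x)).Finite := by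
  apply Set.Finite.subset (Set.Finite.union (Set.finite_singleton x) (G.neighborSet x).toFinite)
  intro z hz
  rcases mu_support' G hz with h | h
  · exact Or.inl h
  · exact Or.inr h

lemma mu_sum {p : ℝ} {x : V} (h : G.degree x ≠ 0 ∨ p = 1) : ∑ᶠ z, mu G p x z = 1 := by
  classical
  have hsupp : ∀ z, mu G p x z ≠ 0 → z ∈ insert x (G.neighborFinset x) := by
    intro z hz
    rcases mu_support' G hz with h | h
    · simp [h]
    · simp [SimpleGraph.mem_neighborFinset, h]
  rw [finsum_eq_finset_sum _ (insert x (G.neighborFinset x)) hsupp]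
  rw [Finset.sum_insert (SimpleGraph.notMem_neighborFinset_self G x)]
  have hc : ∀ z ∈ G.neighborFinset x, mu G p x z = (1-p)/(G.degree x) := fun z hz =>
    mu_adj G ((SimpleGraph.mem_neighborFinset G x z).mp hz)
  rw [mu_self, Finset.sum_congr rfl hc, Finset.sum_const,
    SimpleGraph.card_neighborFinset_eq_degree, nsmul_eq_mul]
  rcases h with h | h
  · have : (G.degree x : ℝ) ≠ 0 := Nat.cast_ne_zero.mpr h
    field_simp; ring
  · subst h; simp

end Mu

/-! ### distances -/

lemma boxProd_dist_le {VG VH : Type*} {G : SimpleGraph VG} {H : SimpleGraph VH}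
    (hG : G.Connected) (hH : H.Connected) (z z' : VG) (w w' : VH) :
    ((G.boxProd H).dist (z,w) (z',w') : ℝ) ≤ (G.dist z z' : ℝ) + (H.dist w w' : ℝ) := by
  obtain ⟨pG, hpG⟩ := hG.exists_walk_length_eq_dist z z'
  obtain ⟨pH, hpH⟩ := hH.exists_walk_length_eq_dist w w'
  have h := SimpleGraph.dist_le ((pG.boxProdLeft H w).append (SimpleGraph.Walk.boxProdRight G z' pH))
  rw [SimpleGraph.Walk.length_append] at h
  have e1 : (pG.boxProdLeft H w).length = pG.length := SimpleGraph.Walk.length_map _ _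
  have e2 : (SimpleGraph.Walk.boxProdRight G z' pH).length = pH.length :=
    SimpleGraph.Walk.length_map _ _
  rw [e1, e2, hpG, hpH] at h
  exact_mod_cast h

/-! ### cost and subplans -/

noncomputable def cost (G : SimpleGraph V) (F : V → V → ℝ) : ℝ :=
  ∑ᶠ u, ∑ᶠ v, (G.dist u v : ℝ) * F u v

lemma cost_nonneg (G : SimpleGraph V) {F : V → V → ℝ} (h : ∀ u v, 0 ≤ F u v) :
    0 ≤ cost G F :=
  finsum_nonneg fun u => finsum_nonneg fun v => mul_nonneg (Nat.cast_nonneg _) (h u v)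

structure SubPlan (μ₁ μ₂ : V → ℝ) (F : V → V → ℝ) : Prop where
  nonneg : ∀ u v, 0 ≤ F u v
  fin : (Function.support (Function.uncurry F)).Finite
  rows : ∀ u, ∑ᶠ v, F u v = μ₁ u
  cols_le : ∀ v, μ₂ v ≠ 0 → ∑ᶠ u, F u v ≤ μ₂ v
  cols0 : ∀ v, μ₂ v = 0 → Finite V → ∀ u, F u v = 0

lemma SubPlan.row_supp_fin {μ₁ μ₂ : V → ℝ} {F : V → V → ℝ} (hF : SubPlan μ₁ μ₂ F) (u : V) :
    (support (F u)).Finite := by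
  apply Set.Finite.subset (Set.Finite.image Prod.snd hF.fin)
  intro v hv
  exact ⟨(u, v), hv, rfl⟩

lemma SubPlan.col_supp_fin {μ₁ μ₂ : V → ℝ} {F : V → V → ℝ} (hF : SubPlan μ₁ μ₂ F) (v : V) :
    (support (fun u => F u v)).Finite := by
  apply Set.Finite.subset (Set.Finite.image Prod.fst hF.fin)
  intro u hu
  exact ⟨(u, v), hu, rfl⟩

/-- Cleanup: from an arbitrary coupling, extract a `SubPlan` of no greater cost. -/
lemma cleanup {G : SimpleGraph V} (hconn : G.Connected)
    {μ₁ μ₂ : V → ℝ} (hμ₁fin : (support μ₁).Finite)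
    {π : V → V → ℝ} (hπ : IsCoupling μ₁ μ₂ π) :
    ∃ F, SubPlan μ₁ μ₂ F ∧ cost G F ≤ cost G π := by
  classical
  obtain ⟨hnn, hrows, hcols⟩ := hπ
  set F : V → V → ℝ := fun u v => if μ₁ u ≠ 0 then π u v else 0 with hFdef
  have hrow_fin : ∀ u, μ₁ u ≠ 0 → (support (π u)).Finite := by
    intro u hu
    by_contra hinf
    exact hu ((hrows u).symm.trans (finsum_of_infinite_support hinf))
  have hFrows : ∀ u, ∑ᶠ v, F u v = μ₁ u := by
    intro u
    by_cases hu : μ₁ u ≠ 0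
    · rw [show F u = π u by funext v; simp [hFdef, hu]]
      exact hrows u
    · push_neg at hu
      rw [show F u = fun _ => (0:ℝ) by funext v; simp [hFdef, hu], finsum_zero, hu]
  refine ⟨F, ⟨?_, ?_, hFrows, ?_, ?_⟩, ?_⟩
  · intro u v
    simp only [hFdef]
    split
    · exact hnn u v
    · exact le_refl _
  · -- finite support
    apply Set.Finite.subset (Set.Finite.biUnion hμ₁fin
      (fun u (_ : u ∈ support μ₁) => Set.Finite.image (Prod.mk u) (hrow_fin u ‹_›)))
    rintro ⟨u, v⟩ huv
    have h1 : μ₁ u ≠ 0 := by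
      by_contra h
      exact huv (by simp [Function.uncurry, hFdef, h])
    have h2 : π u v ≠ 0 := by
      by_contra h
      exact huv (by simp [Function.uncurry, hFdef, h])
    exact Set.mem_biUnion h1 ⟨v, h2, rfl⟩
  · -- cols_le
    intro v hv
    have hcol_fin : (support (fun u => π u v)).Finite := by
      by_contra hinf
      exact hv ((hcols v).symm.trans (finsum_of_infinite_support hinf))
    have hsub : support (fun u => F u v) ⊆ support (fun u => π u v) := by
      intro u hu
      simp only [mem_support, hFdef] at hu ⊢
      intro h
      exact hu (by simp [h])
    rw [finsum_eq_finset_sum (fun u => F u v) hcol_fin.toFinset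
      (fun u hu => hcol_fin.mem_toFinset.mpr (hsub hu))]
    rw [← hcols v, finsum_eq_finset_sum (fun u => π u v) hcol_fin.toFinset
      (fun u hu => hcol_fin.mem_toFinset.mpr hu)]
    apply Finset.sum_le_sum
    intro i _
    simp only [hFdef]
    split
    · exact le_refl _
    · exact hnn i v
  · -- cols0
    intro v hv _
    intro u
    have hcol_fin : (support (fun u => π u v)).Finite := Set.toFinite _
    have hall : ∀ u, π u v = 0 := by
      apply all_zero_of_finsum_zero hcol_fin (fun u => hnn u v)
      rw [hcols v, hv]
    simp only [hFdef]
    split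
    · exact hall u
    · rfl
  · -- cost comparison
    have hFle : ∀ u, ∑ᶠ v, (G.dist u v : ℝ) * F u v ≤ ∑ᶠ v, (G.dist u v : ℝ) * π u v := by
      intro u
      by_cases hu : μ₁ u ≠ 0
      · rw [show F u = π u by funext v; simp [hFdef, hu]]
      · push_neg at hu
        rw [show (fun v => (G.dist u v : ℝ) * F u v) = fun _ => (0:ℝ) by
          funext v; simp [hFdef, hu]]
        rw [finsum_zero]
        exact finsum_nonneg fun v => mul_nonneg (Nat.cast_nonneg _) (hnn u v)
    have hFsupp : ∀ u, (∑ᶠ v, (G.dist u v : ℝ) * F u v) ≠ 0 → u ∈ hμ₁fin.toFinset := by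
      intro u hu
      apply hμ₁fin.mem_toFinset.mpr
      by_contra h
      simp only [mem_support, not_not] at h
      exact hu (by rw [show (fun v => (G.dist u v : ℝ) * F u v) = fun _ => (0:ℝ) by
        funext v; simp [hFdef, h], finsum_zero])
    have hπsupp : ∀ u, (∑ᶠ v, (G.dist u v : ℝ) * π u v) ≠ 0 → u ∈ hμ₁fin.toFinset := by
      intro u hu
      apply hμ₁fin.mem_toFinset.mpr
      by_contra h
      simp only [mem_support, not_not] at h
      exact hu (finsum_dist_mul_zero hconn (hnn u) (by rw [hrows u, h]) u)
    unfold cost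
    rw [finsum_eq_finset_sum _ hμ₁fin.toFinset hFsupp,
      finsum_eq_finset_sum _ hμ₁fin.toFinset hπsupp]
    exact Finset.sum_le_sum fun u _ => hFle u

/-- In the finite case, a subplan is automatically a coupling. -/
lemma realize_finite [Finite V] {μ₁ μ₂ : V → ℝ} {F : V → V → ℝ}
    (hF : SubPlan μ₁ μ₂ F) (h1 : ∑ᶠ v, μ₁ v = 1) (h2 : ∑ᶠ v, μ₂ v = 1) :
    IsCoupling μ₁ μ₂ F := by
  classical
  cases nonempty_fintype V
  refine ⟨hF.nonneg, hF.rows, ?_⟩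
  have hcole : ∀ v, ∑ᶠ u, F u v = ∑ u : V, F u v := fun v =>
    finsum_eq_finset_sum _ Finset.univ (fun x _ => Finset.mem_univ x)
  have hrowe : ∀ u, ∑ᶠ v, F u v = ∑ v : V, F u v := fun u =>
    finsum_eq_finset_sum _ Finset.univ (fun x _ => Finset.mem_univ x)
  have hle : ∀ v ∈ Finset.univ, ∑ u : V, F u v ≤ μ₂ v := by
    intro v _
    by_cases hv : μ₂ v = 0
    · rw [Finset.sum_congr rfl (fun u _ => hF.cols0 v hv ‹Finite V› u), Finset.sum_const_zero, hv]
    · rw [← hcole v]; exact hF.cols_le v hv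
  have htot : ∑ v : V, ∑ u : V, F u v = ∑ v : V, μ₂ v := by
    rw [Finset.sum_comm]
    have : ∀ u : V, ∑ v : V, F u v = μ₁ u := by
      intro u; rw [← hrowe u]; exact hF.rows u
    rw [Finset.sum_congr rfl (fun u _ => this u)]
    rw [← finsum_eq_finset_sum μ₁ Finset.univ (fun x _ => Finset.mem_univ x), h1,
      ← finsum_eq_finset_sum μ₂ Finset.univ (fun x _ => Finset.mem_univ x), h2]
  have := (Finset.sum_eq_sum_iff_of_le hle).mp htot
  intro v
  rw [hcole v]
  exact this v (Finset.mem_univ v)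

/-- In the infinite case, a subplan can be upgraded to a coupling of the same cost. -/
lemma realize_infinite [Infinite V] {G : SimpleGraph V} (hconn : G.Connected)
    {μ₁ μ₂ : V → ℝ} (h1 : (support μ₁).Finite) (h2 : (support μ₂).Finite)
    (h2n : ∀ v, 0 ≤ μ₂ v) {F : V → V → ℝ} (hF : SubPlan μ₁ μ₂ F) :
    ∃ π, IsCoupling μ₁ μ₂ π ∧ cost G π = cost G F := by
  classical
  have hT : (support μ₁ ∪ support μ₂ ∪ Prod.fst '' support (uncurry F)
      ∪ Prod.snd '' support (uncurry F)).Finite :=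
    ((h1.union h2).union (hF.fin.image _)).union (hF.fin.image _)
  set T : Set V := support μ₁ ∪ support μ₂ ∪ Prod.fst '' support (uncurry F)
      ∪ Prod.snd '' support (uncurry F) with hTdef
  let g : ℕ ↪ ↥(Tᶜ) := (hT.infinite_compl).natEmbedding
  set gg : ℕ → V := fun n => (g n : V) with hggdef
  have hgg_inj : Function.Injective gg := fun m n h => g.injective (Subtype.ext h)
  have hgg_not : ∀ n, gg n ∉ T := fun n => (g n).2
  have hrange_inf : (Set.range gg).Infinite := Set.infinite_range_of_injective hgg_inj
  have hrange_not : ∀ v ∈ Set.range gg, v ∉ T := by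
    rintro v ⟨n, rfl⟩; exact hgg_not n
  have hμ₁r : ∀ v ∈ Set.range gg, μ₁ v = 0 := by
    intro v hv
    by_contra h
    exact hrange_not v hv (Or.inl (Or.inl (Or.inl h)))
  have hμ₂r : ∀ v ∈ Set.range gg, μ₂ v = 0 := by
    intro v hv
    by_contra h
    exact hrange_not v hv (Or.inl (Or.inl (Or.inr h)))
  have hFr : ∀ u ∈ Set.range gg, ∀ v, F u v = 0 := by
    intro u hu v
    by_contra h
    exact hrange_not u hu (Or.inl (Or.inr ⟨(u,v), h, rfl⟩))
  have hFrow0 : ∀ u, μ₁ u = 0 → ∀ v, F u v = 0 := fun u hu =>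
    all_zero_of_finsum_zero (hF.row_supp_fin u) (hF.nonneg u) ((hF.rows u).trans hu)
  set D : Set V := {v | μ₂ v = 0 ∧ ∑ᶠ u, F u v ≠ 0} with hDdef
  set ghost : V → V → ℝ := fun u v =>
    (if u = gg 0 ∧ μ₂ v ≠ 0 then μ₂ v - ∑ᶠ w, F w v else 0) +
    (if u ∈ Set.range gg ∧ (v ∈ Set.range gg ∨ v ∈ D) then 1 else 0) with hghdef
  set π : V → V → ℝ := fun u v => F u v + ghost u v with hπdef
  have hghost_nonneg : ∀ u v, 0 ≤ ghost u v := by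
    intro u v
    apply add_nonneg
    · split
      · rename_i hc
        have hle : ∑ᶠ w, F w v ≤ μ₂ v := hF.cols_le v hc.2
        linarith
      · exact le_refl _
    · split
      · exact zero_le_one
      · exact le_refl _
  have hπ_nonneg : ∀ u v, 0 ≤ π u v := fun u v =>
    add_nonneg (hF.nonneg u v) (hghost_nonneg u v)
  -- key: each element of the range of gg gives entry 1 against range elements
  have hπ_one : ∀ u ∈ Set.range gg, ∀ v ∈ Set.range gg, π u v = 1 := by
    intro u hu v hv
    have h1 : F u v = 0 := hFr u hu v
    have h2 : ¬ (u = gg 0 ∧ μ₂ v ≠ 0) := by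
      rintro ⟨-, hc⟩; exact hc (hμ₂r v hv)
    have h3 : u ∈ Set.range gg ∧ (v ∈ Set.range gg ∨ v ∈ D) := ⟨hu, Or.inl hv⟩
    simp only [hπdef, hghdef, h1, if_neg h2, if_pos h3, zero_add]
  have hπ_eqF : ∀ u, u ∉ Set.range gg → π u = F u := by
    intro u hu
    funext v
    have hg0 : ¬ (u = gg 0 ∧ μ₂ v ≠ 0) := by
      rintro ⟨h, -⟩; exact hu (h ▸ Set.mem_range_self 0)
    have hg1 : ¬ (u ∈ Set.range gg ∧ (v ∈ Set.range gg ∨ v ∈ D)) := by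
      rintro ⟨h, -⟩; exact hu h
    simp only [hπdef, hghdef]
    rw [if_neg hg0, if_neg hg1]
    ring
  refine ⟨π, ⟨hπ_nonneg, ?_, ?_⟩, ?_⟩
  · -- rows
    intro u
    by_cases hu : u ∈ Set.range gg
    · rw [hμ₁r u hu]
      apply finsum_of_infinite_support
      apply Set.Infinite.mono _ hrange_inf
      intro v hv
      simp only [mem_support]
      rw [hπ_one u hu v hv]
      exact one_ne_zero
    · rw [hπ_eqF u hu]; exact hF.rows u
  · -- cols
    intro v
    by_cases hv : μ₂ v = 0
    · by_cases hD : v ∈ Set.range gg ∨ v ∈ D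
      · rw [hv]
        apply finsum_of_infinite_support
        apply Set.Infinite.mono _ hrange_inf
        intro u hu
        simp only [mem_support]
        have hg : ghost u v = 1 := by
          simp only [hghdef]
          have h3 : u ∈ Set.range gg ∧ (v ∈ Set.range gg ∨ v ∈ D) := ⟨hu, hD⟩
          rw [if_neg (by rintro ⟨-, hc⟩; exact hc hv), if_pos h3, zero_add]
        have : π u v = F u v + 1 := by rw [hπdef]; simp [hg]
        rw [this]
        have := hF.nonneg u v
        linarith
      · push_neg at hD
        have hcol0 : ∑ᶠ u, F u v = 0 := by
          by_contra h
          exact hD.2 ⟨hv, h⟩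
        have : ∀ u, π u v = F u v := by
          intro u
          have hg0 : ¬ (u = gg 0 ∧ μ₂ v ≠ 0) := by rintro ⟨-, hc⟩; exact hc hv
          have hg1 : ¬ (u ∈ Set.range gg ∧ (v ∈ Set.range gg ∨ v ∈ D)) := by
            rintro ⟨-, hc⟩
            rcases hc with hc | hc
            · exact hD.1 hc
            · exact hD.2 hc
          simp only [hπdef, hghdef]
          rw [if_neg hg0, if_neg hg1]
          ring
        rw [show (fun u => π u v) = fun u => F u v from funext this, hcol0, hv]
    · -- honest column
      have hvr : v ∉ Set.range gg := fun h => hv (hμ₂r v h)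
      have hvD : v ∉ D := fun h => hv h.1
      have hg : ∀ u, ghost u v = if u = gg 0 then μ₂ v - ∑ᶠ w, F w v else 0 := by
        intro u
        have hB : ¬ (u ∈ Set.range gg ∧ (v ∈ Set.range gg ∨ v ∈ D)) := by
          rintro ⟨-, hc⟩
          rcases hc with h | h
          · exact hvr h
          · exact hvD h
        simp only [hghdef]
        rw [if_neg hB, add_zero]
        by_cases h : u = gg 0
        · rw [if_pos (show u = gg 0 ∧ μ₂ v ≠ 0 from ⟨h, hv⟩), if_pos h]
        · rw [if_neg (show ¬(u = gg 0 ∧ μ₂ v ≠ 0) from fun hc => h hc.1), if_neg h]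
      rw [show (fun u => π u v) = fun u => F u v + (if u = gg 0 then μ₂ v - ∑ᶠ w, F w v else 0)
        from funext fun u => by rw [hπdef]; simp [hg u]]
      rw [finsum_add_distrib (hF.col_supp_fin v)
        (Set.Finite.subset (Set.finite_singleton (gg 0)) (fun u hu => by
          simp only [mem_support] at hu
          by_contra h
          exact hu (if_neg h)))]
      rw [finsum_eq_single _ (gg 0) (fun x hx => if_neg hx), if_pos rfl]
      ring
  · -- cost equality
    unfold cost
    apply finsum_congr
    intro u
    by_cases hu : u ∈ Set.range gg
    · have hFu : ∀ v, F u v = 0 := hFr u hu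
      have hrhs : ∑ᶠ v, (G.dist u v : ℝ) * F u v = 0 := by
        rw [show (fun v => (G.dist u v : ℝ) * F u v) = fun _ => (0:ℝ) from
          funext fun v => by rw [hFu v, mul_zero], finsum_zero]
      rw [hrhs]
      apply finsum_of_infinite_support
      apply Set.Infinite.mono _ (hrange_inf.diff (Set.finite_singleton u))
      intro v hv
      obtain ⟨hv1, hv2⟩ := hv
      have hne : v ≠ u := by simpa using hv2
      have hd : (0:ℝ) < G.dist u v := by
        exact_mod_cast hconn.pos_dist_of_ne (Ne.symm hne)
      simp only [mem_support]
      rw [hπ_one u hu v hv1, mul_one]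
      exact ne_of_gt hd
    · rw [hπ_eqF u hu]

/-! ### Finset sum forms of subplan data -/

section SumForms

variable {μ₁ μ₂ : V → ℝ} {F : V → V → ℝ} {s : Finset V}

lemma SubPlan.row_sum (hF : SubPlan μ₁ μ₂ F)
    (hcov : ∀ u v, F u v ≠ 0 → u ∈ s ∧ v ∈ s) (u : V) : ∑ v ∈ s, F u v = μ₁ u := by
  rw [← hF.rows u, finsum_eq_finset_sum (F u) s (fun v h => (hcov u v h).2)]

lemma col_sum_eq (F : V → V → ℝ)
    (hcov : ∀ u v, F u v ≠ 0 → u ∈ s ∧ v ∈ s) (v : V) :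
    ∑ u ∈ s, F u v = ∑ᶠ u, F u v :=
  (finsum_eq_finset_sum (fun u => F u v) s (fun u h => (hcov u v h).1)).symm

lemma SubPlan.supp_row_sub (hF : SubPlan μ₁ μ₂ F)
    (hcov : ∀ u v, F u v ≠ 0 → u ∈ s ∧ v ∈ s) {u : V} (h : μ₁ u ≠ 0) : u ∈ s := by
  by_contra hu
  apply h
  rw [← hF.rows u,
    show F u = (fun _ => (0:ℝ)) from funext fun v => by
      by_contra hv; exact hu (hcov u v hv).1]
  exact finsum_zero

lemma SubPlan.sum_mu₁ (hF : SubPlan μ₁ μ₂ F)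
    (hcov : ∀ u v, F u v ≠ 0 → u ∈ s ∧ v ∈ s) : ∑ u ∈ s, μ₁ u = ∑ᶠ u, μ₁ u :=
  (finsum_eq_finset_sum μ₁ s (fun u h => hF.supp_row_sub hcov h)).symm

lemma cost_sum_eq (G : SimpleGraph V) (F : V → V → ℝ)
    (hcov : ∀ u v, F u v ≠ 0 → u ∈ s ∧ v ∈ s) :
    cost G F = ∑ u ∈ s, ∑ v ∈ s, (G.dist u v : ℝ) * F u v := by
  unfold cost
  rw [finsum_eq_finset_sum _ s (fun u h => ?_)]
  · exact Finset.sum_congr rfl fun u _ =>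
      finsum_eq_finset_sum _ s (fun v hv => (hcov u v (right_ne_zero_of_mul hv)).2)
  · by_contra hu
    apply h
    rw [show (fun v => (G.dist u v : ℝ) * F u v) = fun _ => (0:ℝ) from funext fun v => by
      by_contra hv
      exact hu (hcov u v (right_ne_zero_of_mul hv)).1]
    exact finsum_zero

end SumForms

section PairSums

variable {VG VH : Type*} [DecidableEq VG] [DecidableEq VH]
variable {sG : Finset VG} {sH : Finset VH}

lemma sum_single_snd {c : VH} (hc : c ∈ sH) (g : VG → ℝ) :
    ∑ v ∈ sG ×ˢ sH, (if v.2 = c then g v.1 else 0) = ∑ z ∈ sG, g z := by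
  rw [Finset.sum_product]
  refine Finset.sum_congr rfl fun z _ => ?_
  rw [Finset.sum_ite_eq' sH c (fun _ => g z), if_pos hc]

lemma sum_single_fst {c : VG} (hc : c ∈ sG) (g : VH → ℝ) :
    ∑ v ∈ sG ×ˢ sH, (if v.1 = c then g v.2 else 0) = ∑ w ∈ sH, g w := by
  rw [Finset.sum_product]
  calc ∑ z ∈ sG, ∑ w ∈ sH, (if z = c then g w else 0)
      = ∑ z ∈ sG, (if z = c then ∑ w ∈ sH, g w else 0) := by
        refine Finset.sum_congr rfl fun z _ => ?_
        rw [sum_if_const]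
    _ = ∑ w ∈ sH, g w := by
        rw [Finset.sum_ite_eq' sG c (fun _ => ∑ w ∈ sH, g w), if_pos hc]

lemma sum_pair_GG {c₁ c₂ : VH} (h1 : c₁ ∈ sH) (h2 : c₂ ∈ sH) (g : VG → VG → ℝ) :
    ∑ u ∈ sG ×ˢ sH, ∑ v ∈ sG ×ˢ sH, (if u.2 = c₁ ∧ v.2 = c₂ then g u.1 v.1 else 0)
    = ∑ z ∈ sG, ∑ z' ∈ sG, g z z' := by
  rw [Finset.sum_product]
  calc ∑ z ∈ sG, ∑ w ∈ sH, ∑ v ∈ sG ×ˢ sH, (if w = c₁ ∧ v.2 = c₂ then g z v.1 else 0)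
      = ∑ z ∈ sG, ∑ w ∈ sH, (if w = c₁ then ∑ z' ∈ sG, g z z' else 0) := by
        refine Finset.sum_congr rfl fun z _ => Finset.sum_congr rfl fun w _ => ?_
        calc ∑ v ∈ sG ×ˢ sH, (if w = c₁ ∧ v.2 = c₂ then g z v.1 else 0)
            = ∑ v ∈ sG ×ˢ sH, (if w = c₁ then (if v.2 = c₂ then g z v.1 else 0) else 0) := by
              refine Finset.sum_congr rfl fun v _ => ?_
              rw [ite_and]
          _ = if w = c₁ then ∑ v ∈ sG ×ˢ sH, (if v.2 = c₂ then g z v.1 else 0) else 0 := by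
              rw [sum_if_const]
          _ = if w = c₁ then ∑ z' ∈ sG, g z z' else 0 := by
              rw [sum_single_snd h2]
    _ = ∑ z ∈ sG, ∑ z' ∈ sG, g z z' := by
        refine Finset.sum_congr rfl fun z _ => ?_
        rw [Finset.sum_ite_eq' sH c₁ (fun _ => ∑ z' ∈ sG, g z z'), if_pos h1]

lemma sum_pair_HH {c₁ c₂ : VG} (h1 : c₁ ∈ sG) (h2 : c₂ ∈ sG) (g : VH → VH → ℝ) :
    ∑ u ∈ sG ×ˢ sH, ∑ v ∈ sG ×ˢ sH, (if u.1 = c₁ ∧ v.1 = c₂ then g u.2 v.2 else 0)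
    = ∑ w ∈ sH, ∑ w' ∈ sH, g w w' := by
  rw [Finset.sum_product]
  calc ∑ z ∈ sG, ∑ w ∈ sH, ∑ v ∈ sG ×ˢ sH, (if z = c₁ ∧ v.1 = c₂ then g w v.2 else 0)
      = ∑ z ∈ sG, (if z = c₁ then ∑ w ∈ sH, ∑ w' ∈ sH, g w w' else 0) := by
        refine Finset.sum_congr rfl fun z _ => ?_
        calc ∑ w ∈ sH, ∑ v ∈ sG ×ˢ sH, (if z = c₁ ∧ v.1 = c₂ then g w v.2 else 0)
            = ∑ w ∈ sH, (if z = c₁ then ∑ w' ∈ sH, g w w' else 0) := by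
              refine Finset.sum_congr rfl fun w _ => ?_
              calc ∑ v ∈ sG ×ˢ sH, (if z = c₁ ∧ v.1 = c₂ then g w v.2 else 0)
                  = ∑ v ∈ sG ×ˢ sH, (if z = c₁ then (if v.1 = c₂ then g w v.2 else 0)
                      else 0) := by
                    refine Finset.sum_congr rfl fun v _ => ?_
                    rw [ite_and]
                _ = if z = c₁ then ∑ v ∈ sG ×ˢ sH, (if v.1 = c₂ then g w v.2 else 0)
                      else 0 := by rw [sum_if_const]
                _ = if z = c₁ then ∑ w' ∈ sH, g w w' else 0 := by rw [sum_single_fst h2]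
          _ = if z = c₁ then ∑ w ∈ sH, ∑ w' ∈ sH, g w w' else 0 := by rw [sum_if_const]
    _ = ∑ w ∈ sH, ∑ w' ∈ sH, g w w' := by
        rw [Finset.sum_ite_eq' sG c₁ (fun _ => ∑ w ∈ sH, ∑ w' ∈ sH, g w w'), if_pos h1]

lemma sum_pair_cross {c₁ : VG} {c₂ : VH} (h1 : c₁ ∈ sG) (h2 : c₂ ∈ sH) (g : VH → VG → ℝ) :
    ∑ u ∈ sG ×ˢ sH, ∑ v ∈ sG ×ˢ sH, (if u.1 = c₁ ∧ v.2 = c₂ then g u.2 v.1 else 0)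
    = ∑ w ∈ sH, ∑ z' ∈ sG, g w z' := by
  rw [Finset.sum_product]
  calc ∑ z ∈ sG, ∑ w ∈ sH, ∑ v ∈ sG ×ˢ sH, (if z = c₁ ∧ v.2 = c₂ then g w v.1 else 0)
      = ∑ z ∈ sG, (if z = c₁ then ∑ w ∈ sH, ∑ z' ∈ sG, g w z' else 0) := by
        refine Finset.sum_congr rfl fun z _ => ?_
        calc ∑ w ∈ sH, ∑ v ∈ sG ×ˢ sH, (if z = c₁ ∧ v.2 = c₂ then g w v.1 else 0)
            = ∑ w ∈ sH, (if z = c₁ then ∑ z' ∈ sG, g w z' else 0) := by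
              refine Finset.sum_congr rfl fun w _ => ?_
              calc ∑ v ∈ sG ×ˢ sH, (if z = c₁ ∧ v.2 = c₂ then g w v.1 else 0)
                  = ∑ v ∈ sG ×ˢ sH, (if z = c₁ then (if v.2 = c₂ then g w v.1 else 0)
                      else 0) := by
                    refine Finset.sum_congr rfl fun v _ => ?_
                    rw [ite_and]
                _ = if z = c₁ then ∑ v ∈ sG ×ˢ sH, (if v.2 = c₂ then g w v.1 else 0)
                      else 0 := by rw [sum_if_const]
                _ = if z = c₁ then ∑ z' ∈ sG, g w z' else 0 := by rw [sum_single_snd h2]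
          _ = if z = c₁ then ∑ w ∈ sH, ∑ z' ∈ sG, g w z' else 0 := by rw [sum_if_const]
    _ = ∑ w ∈ sH, ∑ z' ∈ sG, g w z' := by
        rw [Finset.sum_ite_eq' sG c₁ (fun _ => ∑ w ∈ sH, ∑ z' ∈ sG, g w z'), if_pos h1]

end PairSums

lemma mul_sum_sum {α β : Type*} (s : Finset α) (t : Finset β) (c : ℝ) (f : α → β → ℝ) :
    ∑ z ∈ s, ∑ z' ∈ t, c * f z z' = c * ∑ z ∈ s, ∑ z' ∈ t, f z z' := by
  simp [Finset.mul_sum]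

/-! ### The core product construction, `p = 0` case -/

lemma core_zero {VG VH : Type*} [DecidableEq VG] [DecidableEq VH]
    {G : SimpleGraph VG} {H : SimpleGraph VH}
    (hGconn : G.Connected) (hHconn : H.Connected)
    (x₁ x₂ : VG) (y₁ y₂ : VH)
    {a b : ℝ} (ha0 : 0 < a) (hb0 : 0 < b) (hab : a + b = 1)
    {α₁ α₂ : VG → ℝ} {β₁ β₂ : VH → ℝ} {μ₁ μ₂ : VG × VH → ℝ}
    (hα₁sum : ∑ᶠ z, α₁ z = 1) (hβ₁sum : ∑ᶠ w, β₁ w = 1)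
    (hα₂x : α₂ x₂ = 0) (hβ₂y : β₂ y₂ = 0)
    (hμ₁ : ∀ z w, μ₁ (z, w) = (if w = y₁ then a * α₁ z else 0)
        + (if z = x₁ then b * β₁ w else 0))
    (hμ₂ : ∀ z w, μ₂ (z, w) = (if w = y₂ then a * α₂ z else 0)
        + (if z = x₂ then b * β₂ w else 0))
    {FG : VG → VG → ℝ} {FH : VH → VH → ℝ}
    (hFG : SubPlan α₁ α₂ FG) (hFH : SubPlan β₁ β₂ FH) :
    ∃ FP, SubPlan μ₁ μ₂ FP ∧
      cost (G.boxProd H) FP ≤ a * cost G FG + b * cost H FH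
        + b * (G.dist x₁ x₂ : ℝ) + a * (H.dist y₁ y₂ : ℝ) := by
  classical
  set sG : Finset VG := (hFG.fin.toFinset.image Prod.fst ∪ hFG.fin.toFinset.image Prod.snd)
      ∪ {x₁, x₂} with hsGdef
  set sH : Finset VH := (hFH.fin.toFinset.image Prod.fst ∪ hFH.fin.toFinset.image Prod.snd)
      ∪ {y₁, y₂} with hsHdef
  have hGcov : ∀ z z', FG z z' ≠ 0 → z ∈ sG ∧ z' ∈ sG := by
    intro z z' h
    constructor
    · exact Finset.mem_union_left _ (Finset.mem_union_left _
        (Finset.mem_image.mpr ⟨(z,z'), hFG.fin.mem_toFinset.mpr h, rfl⟩))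
    · exact Finset.mem_union_left _ (Finset.mem_union_right _
        (Finset.mem_image.mpr ⟨(z,z'), hFG.fin.mem_toFinset.mpr h, rfl⟩))
  have hHcov : ∀ w w', FH w w' ≠ 0 → w ∈ sH ∧ w' ∈ sH := by
    intro w w' h
    constructor
    · exact Finset.mem_union_left _ (Finset.mem_union_left _
        (Finset.mem_image.mpr ⟨(w,w'), hFH.fin.mem_toFinset.mpr h, rfl⟩))
    · exact Finset.mem_union_left _ (Finset.mem_union_right _
        (Finset.mem_image.mpr ⟨(w,w'), hFH.fin.mem_toFinset.mpr h, rfl⟩))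
  have hx₁ : x₁ ∈ sG := Finset.mem_union_right _ (by simp)
  have hx₂ : x₂ ∈ sG := Finset.mem_union_right _ (by simp)
  have hy₁ : y₁ ∈ sH := Finset.mem_union_right _ (by simp)
  have hy₂ : y₂ ∈ sH := Finset.mem_union_right _ (by simp)
  set FP : VG × VH → VG × VH → ℝ := fun u v =>
    (if u.2 = y₁ ∧ v.2 = y₂ then a * FG u.1 v.1 else 0)
    + (if u.1 = x₁ ∧ v.1 = x₂ then b * FH u.2 v.2 else 0) with hFPdef
  have hFP_nonneg : ∀ u v, 0 ≤ FP u v := by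
    intro u v
    apply add_nonneg
    · split
      · exact mul_nonneg ha0.le (hFG.nonneg _ _)
      · exact le_refl _
    · split
      · exact mul_nonneg hb0.le (hFH.nonneg _ _)
      · exact le_refl _
  have hFPcov : ∀ u v, FP u v ≠ 0 → u ∈ sG ×ˢ sH ∧ v ∈ sG ×ˢ sH := by
    intro u v h
    have h1 : (if u.2 = y₁ ∧ v.2 = y₂ then a * FG u.1 v.1 else 0) ≠ 0
        ∨ (if u.1 = x₁ ∧ v.1 = x₂ then b * FH u.2 v.2 else 0) ≠ 0 := by
      by_contra hc
      push_neg at hc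
      exact h (by rw [hFPdef]; simp only; rw [hc.1, hc.2, add_zero])
    rcases h1 with h1 | h1
    · rw [ne_eq, ite_eq_right_iff, not_forall] at h1
      obtain ⟨⟨e1, e2⟩, hne⟩ := h1
      have hG : FG u.1 v.1 ≠ 0 := fun hc => hne (by rw [hc, mul_zero])
      refine ⟨Finset.mem_product.mpr ⟨(hGcov _ _ hG).1, e1 ▸ hy₁⟩,
        Finset.mem_product.mpr ⟨(hGcov _ _ hG).2, e2 ▸ hy₂⟩⟩
    · rw [ne_eq, ite_eq_right_iff, not_forall] at h1
      obtain ⟨⟨e1, e2⟩, hne⟩ := h1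
      have hH : FH u.2 v.2 ≠ 0 := fun hc => hne (by rw [hc, mul_zero])
      refine ⟨Finset.mem_product.mpr ⟨e1 ▸ hx₁, (hHcov _ _ hH).1⟩,
        Finset.mem_product.mpr ⟨e2 ▸ hx₂, (hHcov _ _ hH).2⟩⟩
  -- row sums
  have hFProws : ∀ u, ∑ᶠ v, FP u v = μ₁ u := by
    rintro ⟨z, w⟩
    rw [finsum_eq_finset_sum (FP (z,w)) (sG ×ˢ sH)
      (fun v h => (hFPcov (z,w) v h).2), Finset.sum_product]
    have hpt : ∀ z' ∈ sG, ∀ w' ∈ sH, FP (z,w) (z',w')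
        = (if w = y₁ then (if w' = y₂ then a * FG z z' else 0) else 0)
          + (if z = x₁ then (if z' = x₂ then b * FH w w' else 0) else 0) := by
      intro z' _ w' _
      rw [hFPdef]
      simp only [ite_and]
    calc ∑ z' ∈ sG, ∑ w' ∈ sH, FP (z,w) (z',w')
        = ∑ z' ∈ sG, ∑ w' ∈ sH,
            ((if w = y₁ then (if w' = y₂ then a * FG z z' else 0) else 0)
            + (if z = x₁ then (if z' = x₂ then b * FH w w' else 0) else 0)) := by
          exact Finset.sum_congr rfl fun z' hz' => Finset.sum_congr rfl fun w' hw' =>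
            hpt z' hz' w' hw'
      _ = (if w = y₁ then a * α₁ z else 0) + (if z = x₁ then b * β₁ w else 0) := by
          simp only [Finset.sum_add_distrib]
          congr 1
          · calc ∑ z' ∈ sG, ∑ w' ∈ sH,
                  (if w = y₁ then (if w' = y₂ then a * FG z z' else 0) else 0)
                = ∑ z' ∈ sG, (if w = y₁ then a * FG z z' else 0) := by
                  refine Finset.sum_congr rfl fun z' _ => ?_
                  rw [sum_if_const, Finset.sum_ite_eq' sH y₂ (fun _ => a * FG z z'),
                    if_pos hy₂]
              _ = if w = y₁ then a * α₁ z else 0 := by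
                  rw [sum_if_const, ← Finset.mul_sum, hFG.row_sum hGcov z]
          · calc ∑ z' ∈ sG, ∑ w' ∈ sH,
                  (if z = x₁ then (if z' = x₂ then b * FH w w' else 0) else 0)
                = ∑ z' ∈ sG, (if z = x₁ then (if z' = x₂ then b * β₁ w else 0) else 0) := by
                  refine Finset.sum_congr rfl fun z' _ => ?_
                  rw [sum_if_const, sum_if_const, ← Finset.mul_sum, hFH.row_sum hHcov w]
              _ = if z = x₁ then b * β₁ w else 0 := by
                  rw [sum_if_const, Finset.sum_ite_eq' sG x₂ (fun _ => b * β₁ w), if_pos hx₂]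
      _ = μ₁ (z, w) := (hμ₁ z w).symm
  -- column sums
  have hFPcols : ∀ z' w', ∑ᶠ u, FP u (z', w')
      = (if w' = y₂ then a * ∑ᶠ z, FG z z' else 0)
      + (if z' = x₂ then b * ∑ᶠ w, FH w w' else 0) := by
    intro z' w'
    rw [finsum_eq_finset_sum (fun u => FP u (z',w')) (sG ×ˢ sH)
      (fun u h => (hFPcov u (z',w') h).1), Finset.sum_product]
    have hpt : ∀ z ∈ sG, ∀ w ∈ sH, FP (z,w) (z',w')
        = (if w' = y₂ then (if w = y₁ then a * FG z z' else 0) else 0)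
          + (if z' = x₂ then (if z = x₁ then b * FH w w' else 0) else 0) := by
      intro z _ w _
      rw [hFPdef]
      simp only
      congr 1
      · by_cases h1 : w = y₁ <;> by_cases h2 : w' = y₂ <;> simp [h1, h2]
      · by_cases h1 : z = x₁ <;> by_cases h2 : z' = x₂ <;> simp [h1, h2]
    calc ∑ z ∈ sG, ∑ w ∈ sH, FP (z,w) (z',w')
        = ∑ z ∈ sG, ∑ w ∈ sH,
            ((if w' = y₂ then (if w = y₁ then a * FG z z' else 0) else 0)
            + (if z' = x₂ then (if z = x₁ then b * FH w w' else 0) else 0)) := by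
          exact Finset.sum_congr rfl fun z hz => Finset.sum_congr rfl fun w hw =>
            hpt z hz w hw
      _ = (if w' = y₂ then a * ∑ᶠ z, FG z z' else 0)
          + (if z' = x₂ then b * ∑ᶠ w, FH w w' else 0) := by
          simp only [Finset.sum_add_distrib]
          congr 1
          · calc ∑ z ∈ sG, ∑ w ∈ sH,
                  (if w' = y₂ then (if w = y₁ then a * FG z z' else 0) else 0)
                = ∑ z ∈ sG, (if w' = y₂ then a * FG z z' else 0) := by
                  refine Finset.sum_congr rfl fun z _ => ?_
                  rw [sum_if_const, Finset.sum_ite_eq' sH y₁ (fun _ => a * FG z z'),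
                    if_pos hy₁]
              _ = if w' = y₂ then a * ∑ᶠ z, FG z z' else 0 := by
                  rw [sum_if_const, ← Finset.mul_sum, col_sum_eq FG hGcov z']
          · calc ∑ z ∈ sG, ∑ w ∈ sH,
                  (if z' = x₂ then (if z = x₁ then b * FH w w' else 0) else 0)
                = ∑ z ∈ sG, (if z' = x₂ then (if z = x₁ then b * ∑ᶠ w, FH w w' else 0)
                    else 0) := by
                  refine Finset.sum_congr rfl fun z _ => ?_
                  rw [sum_if_const, sum_if_const, ← Finset.mul_sum, col_sum_eq FH hHcov w']
              _ = if z' = x₂ then b * ∑ᶠ w, FH w w' else 0 := by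
                  rw [sum_if_const, Finset.sum_ite_eq' sG x₁
                    (fun _ => b * ∑ᶠ w, FH w w'), if_pos hx₁]
  have hdG : (0:ℝ) ≤ (G.dist x₁ x₂ : ℝ) := Nat.cast_nonneg _
  have hdH : (0:ℝ) ≤ (H.dist y₁ y₂ : ℝ) := Nat.cast_nonneg _
  refine ⟨FP, ⟨hFP_nonneg, ?_, hFProws, ?_, ?_⟩, ?_⟩
  · -- finite support
    apply Set.Finite.subset (((sG ×ˢ sH) ×ˢ (sG ×ˢ sH) : Finset ((VG × VH) × (VG × VH)))).finite_toSet
    rintro ⟨u, v⟩ h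
    have hm := hFPcov u v h
    exact Finset.mem_coe.mpr (Finset.mem_product.mpr hm)
  · -- cols_le
    rintro ⟨z', w'⟩ hv
    rw [hμ₂ z' w'] at hv ⊢
    rw [hFPcols z' w']
    by_cases h2 : w' = y₂ <;> by_cases h1 : z' = x₂
    · exfalso
      rw [if_pos h2, if_pos h1, h1, h2, hα₂x, hβ₂y] at hv
      simp at hv
    · rw [if_pos h2, if_neg h1, add_zero] at hv
      rw [if_pos h2, if_pos h2, if_neg h1, if_neg h1, add_zero, add_zero]
      have hα : α₂ z' ≠ 0 := fun h => hv (by rw [h, mul_zero])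
      exact mul_le_mul_of_nonneg_left (hFG.cols_le z' hα) ha0.le
    · rw [if_neg h2, if_pos h1, zero_add] at hv
      rw [if_neg h2, if_neg h2, if_pos h1, if_pos h1, zero_add, zero_add]
      have hβ : β₂ w' ≠ 0 := fun h => hv (by rw [h, mul_zero])
      exact mul_le_mul_of_nonneg_left (hFH.cols_le w' hβ) hb0.le
    · exfalso
      rw [if_neg h2, if_neg h1, add_zero] at hv
      exact hv rfl
  · -- cols0
    rintro ⟨z', w'⟩ hv hfin u
    haveI : Finite VG := Finite.of_injective (fun z => ((z, y₁) : VG × VH))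
      (fun s t h => congrArg Prod.fst h)
    haveI : Finite VH := Finite.of_injective (fun w => ((x₁, w) : VG × VH))
      (fun s t h => congrArg Prod.snd h)
    rw [hμ₂ z' w'] at hv
    simp only [hFPdef]
    have h1 : (if u.2 = y₁ ∧ w' = y₂ then a * FG u.1 z' else 0) = 0 := by
      split
      · rename_i hc
        rw [hc.2] at hv
        rw [if_pos rfl] at hv
        have h2nd : (if z' = x₂ then b * β₂ y₂ else 0) = 0 := by
          split
          · rw [hβ₂y, mul_zero]
          · rfl
        rw [h2nd, add_zero] at hv
        have hα : α₂ z' = 0 := by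
          have := mul_eq_zero.mp hv
          rcases this with h | h
          · exact absurd h (ne_of_gt ha0)
          · exact h
        rw [hFG.cols0 z' hα ‹Finite VG› u.1, mul_zero]
      · rfl
    have h2 : (if u.1 = x₁ ∧ z' = x₂ then b * FH u.2 w' else 0) = 0 := by
      split
      · rename_i hc
        rw [hc.2] at hv
        rw [if_pos rfl] at hv
        have h1st : (if w' = y₂ then a * α₂ x₂ else 0) = 0 := by
          split
          · rw [hα₂x, mul_zero]
          · rfl
        rw [h1st, zero_add] at hv
        have hβ : β₂ w' = 0 := by
          rcases mul_eq_zero.mp hv with h | h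
          · exact absurd h (ne_of_gt hb0)
          · exact h
        rw [hFH.cols0 w' hβ ‹Finite VH› u.2, mul_zero]
      · rfl
    rw [h1, h2, add_zero]
  · -- cost bound
    rw [cost_sum_eq (G.boxProd H) FP hFPcov]
    have step1 : ∑ u ∈ sG ×ˢ sH, ∑ v ∈ sG ×ˢ sH, ((G.boxProd H).dist u v : ℝ) * FP u v
        ≤ ∑ u ∈ sG ×ˢ sH, ∑ v ∈ sG ×ˢ sH,
            ((G.dist u.1 v.1 : ℝ) + (H.dist u.2 v.2 : ℝ)) * FP u v := by
      refine Finset.sum_le_sum fun u _ => Finset.sum_le_sum fun v _ => ?_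
      exact mul_le_mul_of_nonneg_right (boxProd_dist_le hGconn hHconn u.1 v.1 u.2 v.2)
        (hFP_nonneg u v)
    have step2 : ∑ u ∈ sG ×ˢ sH, ∑ v ∈ sG ×ˢ sH,
            ((G.dist u.1 v.1 : ℝ) + (H.dist u.2 v.2 : ℝ)) * FP u v
        = (a * cost G FG + a * (H.dist y₁ y₂ : ℝ))
          + (b * cost H FH + b * (G.dist x₁ x₂ : ℝ)) := by
      have expand : ∀ u ∈ sG ×ˢ sH, ∀ v ∈ sG ×ˢ sH,
          ((G.dist u.1 v.1 : ℝ) + (H.dist u.2 v.2 : ℝ)) * FP u v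
          = (if u.2 = y₁ ∧ v.2 = y₂ then
                a * ((G.dist u.1 v.1 : ℝ) * FG u.1 v.1)
                + (a * (H.dist y₁ y₂ : ℝ)) * FG u.1 v.1 else 0)
            + (if u.1 = x₁ ∧ v.1 = x₂ then
                b * ((H.dist u.2 v.2 : ℝ) * FH u.2 v.2)
                + (b * (G.dist x₁ x₂ : ℝ)) * FH u.2 v.2 else 0) := by
        intro u _ v _
        simp only [hFPdef]
        rw [mul_add]
        congr 1
        · split
          · rename_i hc
            rw [hc.1, hc.2]; ring
          · rw [mul_zero]
        · split
          · rename_i hc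
            rw [hc.1, hc.2]; ring
          · rw [mul_zero]
      have hFGmass : ∑ z ∈ sG, ∑ z' ∈ sG, FG z z' = 1 := by
        rw [Finset.sum_congr rfl (fun z _ => hFG.row_sum hGcov z), hFG.sum_mu₁ hGcov, hα₁sum]
      have hFHmass : ∑ w ∈ sH, ∑ w' ∈ sH, FH w w' = 1 := by
        rw [Finset.sum_congr rfl (fun w _ => hFH.row_sum hHcov w), hFH.sum_mu₁ hHcov, hβ₁sum]
      calc ∑ u ∈ sG ×ˢ sH, ∑ v ∈ sG ×ˢ sH,
              ((G.dist u.1 v.1 : ℝ) + (H.dist u.2 v.2 : ℝ)) * FP u v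
          = ∑ u ∈ sG ×ˢ sH, ∑ v ∈ sG ×ˢ sH,
              ((if u.2 = y₁ ∧ v.2 = y₂ then
                a * ((G.dist u.1 v.1 : ℝ) * FG u.1 v.1)
                + (a * (H.dist y₁ y₂ : ℝ)) * FG u.1 v.1 else 0)
              + (if u.1 = x₁ ∧ v.1 = x₂ then
                b * ((H.dist u.2 v.2 : ℝ) * FH u.2 v.2)
                + (b * (G.dist x₁ x₂ : ℝ)) * FH u.2 v.2 else 0)) :=
            Finset.sum_congr rfl fun u hu => Finset.sum_congr rfl fun v hv => expand u hu v hv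
        _ = ∑ u ∈ sG ×ˢ sH, ∑ v ∈ sG ×ˢ sH, (if u.2 = y₁ ∧ v.2 = y₂ then
                a * ((G.dist u.1 v.1 : ℝ) * FG u.1 v.1)
                + (a * (H.dist y₁ y₂ : ℝ)) * FG u.1 v.1 else 0)
            + ∑ u ∈ sG ×ˢ sH, ∑ v ∈ sG ×ˢ sH, (if u.1 = x₁ ∧ v.1 = x₂ then
                b * ((H.dist u.2 v.2 : ℝ) * FH u.2 v.2)
                + (b * (G.dist x₁ x₂ : ℝ)) * FH u.2 v.2 else 0) := by
            simp only [Finset.sum_add_distrib]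
        _ = (a * cost G FG + a * (H.dist y₁ y₂ : ℝ))
            + (b * cost H FH + b * (G.dist x₁ x₂ : ℝ)) := by
            rw [sum_pair_GG hy₁ hy₂ (fun z z' => a * ((G.dist z z' : ℝ) * FG z z')
                + (a * (H.dist y₁ y₂ : ℝ)) * FG z z'),
              sum_pair_HH hx₁ hx₂ (fun w w' => b * ((H.dist w w' : ℝ) * FH w w')
                + (b * (G.dist x₁ x₂ : ℝ)) * FH w w')]
            simp only [Finset.sum_add_distrib]
            rw [mul_sum_sum sG sG a (fun z z' => (G.dist z z' : ℝ) * FG z z'),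
              mul_sum_sum sG sG (a * (H.dist y₁ y₂ : ℝ)) (fun z z' => FG z z'),
              mul_sum_sum sH sH b (fun w w' => (H.dist w w' : ℝ) * FH w w'),
              mul_sum_sum sH sH (b * (G.dist x₁ x₂ : ℝ)) (fun w w' => FH w w'),
              ← cost_sum_eq G FG hGcov, ← cost_sum_eq H FH hHcov, hFGmass, hFHmass]
            ring
    rw [step2] at step1
    linarith

/-! ### The core product construction, `p > 0` case -/

lemma core_pos {VG VH : Type*} [DecidableEq VG] [DecidableEq VH]
    {G : SimpleGraph VG} {H : SimpleGraph VH}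
    (hGconn : G.Connected) (hHconn : H.Connected)
    (x₁ x₂ : VG) (y₁ y₂ : VH)
    {p a b : ℝ} (hp : 0 < p) (ha0 : 0 < a) (hb0 : 0 < b)
    (hpa : p ≤ a) (hpb : p ≤ b)
    {α₁ α₂ : VG → ℝ} {β₁ β₂ : VH → ℝ} {μ₁ μ₂ : VG × VH → ℝ}
    (hα₁sum : ∑ᶠ z, α₁ z = 1) (hβ₁sum : ∑ᶠ w, β₁ w = 1) (hβ₂sum : ∑ᶠ w, β₂ w = 1)
    (hα₁x : α₁ x₁ = p / a) (hα₂x : α₂ x₂ = p / a)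
    (hβ₁y : β₁ y₁ = p / b) (hβ₂y : β₂ y₂ = p / b)
    (hμ₁ : ∀ z w, μ₁ (z, w) = (if w = y₁ then a * α₁ z else 0)
        + (if z = x₁ then b * β₁ w else 0) - (if z = x₁ ∧ w = y₁ then p else 0))
    (hμ₂ : ∀ z w, μ₂ (z, w) = (if w = y₂ then a * α₂ z else 0)
        + (if z = x₂ then b * β₂ w else 0) - (if z = x₂ ∧ w = y₂ then p else 0))
    {FG : VG → VG → ℝ} {FH : VH → VH → ℝ}
    (hFG : SubPlan α₁ α₂ FG) (hFH : SubPlan β₁ β₂ FH) :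
    ∃ FP, SubPlan μ₁ μ₂ FP ∧
      cost (G.boxProd H) FP ≤ a * cost G FG + b * cost H FH
        + (b - p) * (G.dist x₁ x₂ : ℝ) + (a - p) * (H.dist y₁ y₂ : ℝ) := by
  classical
  set sG : Finset VG := (hFG.fin.toFinset.image Prod.fst ∪ hFG.fin.toFinset.image Prod.snd)
      ∪ {x₁, x₂} with hsGdef
  set sH : Finset VH := (hFH.fin.toFinset.image Prod.fst ∪ hFH.fin.toFinset.image Prod.snd)
      ∪ {y₁, y₂} with hsHdef
  have hGcov : ∀ z z', FG z z' ≠ 0 → z ∈ sG ∧ z' ∈ sG := by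
    intro z z' h
    constructor
    · exact Finset.mem_union_left _ (Finset.mem_union_left _
        (Finset.mem_image.mpr ⟨(z,z'), hFG.fin.mem_toFinset.mpr h, rfl⟩))
    · exact Finset.mem_union_left _ (Finset.mem_union_right _
        (Finset.mem_image.mpr ⟨(z,z'), hFG.fin.mem_toFinset.mpr h, rfl⟩))
  have hHcov : ∀ w w', FH w w' ≠ 0 → w ∈ sH ∧ w' ∈ sH := by
    intro w w' h
    constructor
    · exact Finset.mem_union_left _ (Finset.mem_union_left _
        (Finset.mem_image.mpr ⟨(w,w'), hFH.fin.mem_toFinset.mpr h, rfl⟩))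
    · exact Finset.mem_union_left _ (Finset.mem_union_right _
        (Finset.mem_image.mpr ⟨(w,w'), hFH.fin.mem_toFinset.mpr h, rfl⟩))
  have hx₁ : x₁ ∈ sG := Finset.mem_union_right _ (by simp)
  have hx₂ : x₂ ∈ sG := Finset.mem_union_right _ (by simp)
  have hy₁ : y₁ ∈ sH := Finset.mem_union_right _ (by simp)
  have hy₂ : y₂ ∈ sH := Finset.mem_union_right _ (by simp)
  -- scalar quantities
  set t2 : ℝ := ∑ᶠ w, FH w y₂ with ht2def
  have hq1 : p / b ≤ 1 := (div_le_one hb0).mpr hpb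
  have hq0 : 0 < p / b := div_pos hp hb0
  have ht2_0 : 0 ≤ t2 := finsum_nonneg fun w => hFH.nonneg w y₂
  have ht2q : t2 ≤ p / b := by
    rw [ht2def, ← hβ₂y]
    exact hFH.cols_le y₂ (by rw [hβ₂y]; exact ne_of_gt hq0)
  set M : ℝ := 1 - t2 with hMdef
  have hM1q : 1 - p / b ≤ M := by rw [hMdef]; linarith
  have hM0 : 0 ≤ M := le_trans (by linarith) hM1q
  set κ : ℝ := if M = 0 then 1 else (1 - p/b)/M with hκdef
  have hκ0 : 0 ≤ κ := by
    rw [hκdef]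
    split
    · exact zero_le_one
    · exact div_nonneg (by linarith) hM0
  have hκ1 : κ ≤ 1 := by
    rw [hκdef]
    split
    · exact le_refl _
    · rename_i hM
      rw [div_le_one (lt_of_le_of_ne hM0 (Ne.symm hM))]
      exact hM1q
  have hκM : κ * M ≤ 1 - p / b := by
    rw [hκdef]
    split
    · rename_i hM; rw [hM, mul_zero]; linarith
    · rename_i hM
      rw [div_mul_cancel₀ _ hM]
  have hbt2p : b * t2 / p ≤ 1 := by
    rw [div_le_one hp]
    calc b * t2 ≤ b * (p / b) := by
          exact mul_le_mul_of_nonneg_left ht2q hb0.le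
      _ = p := by field_simp
  -- the plan
  set FP : VG × VH → VG × VH → ℝ := fun u v =>
    (if u.2 = y₁ ∧ v.2 = y₂ then (if u.1 = x₁ then 0 else a * FG u.1 v.1) else 0)
    + (if u.1 = x₁ ∧ v.1 = x₂ then (if v.2 = y₂ then 0 else κ * (b * FH u.2 v.2)) else 0)
    + (if u.1 = x₁ ∧ v.1 = x₁ then (if v.2 = y₂ then 0 else (1-κ) * (b * FH u.2 v.2)) else 0)
    + (if u.1 = x₁ ∧ v.2 = y₂ then (a * FG x₁ v.1) * (b * FH u.2 y₂) / p else 0)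
    with hFPdef
  have hFP_nonneg : ∀ u v, 0 ≤ FP u v := by
    intro u v
    have n1 : (0:ℝ) ≤ (if u.1 = x₁ then 0 else a * FG u.1 v.1) := by
      split
      · exact le_refl _
      · exact mul_nonneg ha0.le (hFG.nonneg _ _)
    have n2 : (0:ℝ) ≤ (if v.2 = y₂ then 0 else κ * (b * FH u.2 v.2)) := by
      split
      · exact le_refl _
      · exact mul_nonneg hκ0 (mul_nonneg hb0.le (hFH.nonneg _ _))
    have n3 : (0:ℝ) ≤ (if v.2 = y₂ then 0 else (1-κ) * (b * FH u.2 v.2)) := by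
      split
      · exact le_refl _
      · exact mul_nonneg (by linarith) (mul_nonneg hb0.le (hFH.nonneg _ _))
    have n4 : (0:ℝ) ≤ (a * FG x₁ v.1) * (b * FH u.2 y₂) / p := by
      apply div_nonneg _ hp.le
      exact mul_nonneg (mul_nonneg ha0.le (hFG.nonneg _ _))
        (mul_nonneg hb0.le (hFH.nonneg _ _))
    rw [hFPdef]
    simp only
    apply add_nonneg
    apply add_nonneg
    apply add_nonneg
    all_goals split
    all_goals first
      | exact n1 | exact n2 | exact n3 | exact n4 | exact le_refl _
  have hFPcov : ∀ u v, FP u v ≠ 0 → u ∈ sG ×ˢ sH ∧ v ∈ sG ×ˢ sH := by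
    intro u v h
    rw [hFPdef] at h
    simp only at h
    by_cases c1 : (if u.2 = y₁ ∧ v.2 = y₂ then (if u.1 = x₁ then 0 else a * FG u.1 v.1)
        else 0) ≠ 0
    · rw [ne_eq, ite_eq_right_iff, not_forall] at c1
      obtain ⟨⟨e1, e2⟩, hne⟩ := c1
      have hG : FG u.1 v.1 ≠ 0 := by
        intro hc
        apply hne
        split
        · rfl
        · rw [hc, mul_zero]
      exact ⟨Finset.mem_product.mpr ⟨(hGcov _ _ hG).1, e1 ▸ hy₁⟩,
        Finset.mem_product.mpr ⟨(hGcov _ _ hG).2, e2 ▸ hy₂⟩⟩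
    by_cases c2 : (if u.1 = x₁ ∧ v.1 = x₂ then (if v.2 = y₂ then 0 else κ * (b * FH u.2 v.2))
        else 0) ≠ 0
    · rw [ne_eq, ite_eq_right_iff, not_forall] at c2
      obtain ⟨⟨e1, e2⟩, hne⟩ := c2
      have hH : FH u.2 v.2 ≠ 0 := by
        intro hc
        apply hne
        split
        · rfl
        · rw [hc, mul_zero, mul_zero]
      exact ⟨Finset.mem_product.mpr ⟨e1 ▸ hx₁, (hHcov _ _ hH).1⟩,
        Finset.mem_product.mpr ⟨e2 ▸ hx₂, (hHcov _ _ hH).2⟩⟩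
    by_cases c3 : (if u.1 = x₁ ∧ v.1 = x₁ then (if v.2 = y₂ then 0 else (1-κ) * (b * FH u.2 v.2))
        else 0) ≠ 0
    · rw [ne_eq, ite_eq_right_iff, not_forall] at c3
      obtain ⟨⟨e1, e2⟩, hne⟩ := c3
      have hH : FH u.2 v.2 ≠ 0 := by
        intro hc
        apply hne
        split
        · rfl
        · rw [hc, mul_zero, mul_zero]
      exact ⟨Finset.mem_product.mpr ⟨e1 ▸ hx₁, (hHcov _ _ hH).1⟩,
        Finset.mem_product.mpr ⟨e2 ▸ hx₁, (hHcov _ _ hH).2⟩⟩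
    by_cases c4 : (if u.1 = x₁ ∧ v.2 = y₂ then (a * FG x₁ v.1) * (b * FH u.2 y₂) / p
        else 0) ≠ 0
    · rw [ne_eq, ite_eq_right_iff, not_forall] at c4
      obtain ⟨⟨e1, e2⟩, hne⟩ := c4
      have hG : FG x₁ v.1 ≠ 0 := by
        intro hc
        apply hne
        rw [hc, mul_zero, zero_mul, zero_div]
      have hH : FH u.2 y₂ ≠ 0 := by
        intro hc
        apply hne
        rw [hc, mul_zero, mul_zero, zero_div]
      exact ⟨Finset.mem_product.mpr ⟨e1 ▸ hx₁, (hHcov _ _ hH).1⟩,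
        Finset.mem_product.mpr ⟨(hGcov _ _ hG).2, e2 ▸ hy₂⟩⟩
    · exfalso
      push_neg at c1 c2 c3 c4
      exact h (by rw [c1, c2, c3, c4, add_zero, add_zero, add_zero])
  -- row sums
  have hFProws : ∀ u, ∑ᶠ v, FP u v = μ₁ u := by
    rintro ⟨z, w⟩
    rw [finsum_eq_finset_sum (FP (z,w)) (sG ×ˢ sH) (fun v h => (hFPcov (z,w) v h).2)]
    by_cases hz : z = x₁
    · rw [hz]
      have hpt : ∀ v, FP (x₁, w) v
          = ((if v.1 = x₂ then (if v.2 = y₂ then 0 else κ * (b * FH w v.2)) else 0)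
          + (if v.1 = x₁ then (if v.2 = y₂ then 0 else (1-κ) * (b * FH w v.2)) else 0))
          + (if v.2 = y₂ then (a * FG x₁ v.1) * (b * FH w y₂) / p else 0) := by
        intro v
        rw [hFPdef]
        simp only [eq_self_iff_true, true_and, if_true, ite_self, zero_add]
      rw [Finset.sum_congr rfl (fun v _ => hpt v)]
      simp only [Finset.sum_add_distrib]
      have h2 : ∑ v ∈ sG ×ˢ sH, (if v.1 = x₂ then (if v.2 = y₂ then 0
            else κ * (b * FH w v.2)) else 0)
          = κ * b * β₁ w - κ * b * FH w y₂ := by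
        rw [sum_single_fst hx₂ (fun w' => if w' = y₂ then 0 else κ * (b * FH w w')),
          sum_ite_ne sH y₂ hy₂ (fun w' => κ * (b * FH w w'))]
        have : ∑ w' ∈ sH, κ * (b * FH w w') = κ * b * β₁ w := by
          calc ∑ w' ∈ sH, κ * (b * FH w w') = ∑ w' ∈ sH, (κ * b) * FH w w' :=
                Finset.sum_congr rfl fun w' _ => by ring
            _ = (κ * b) * ∑ w' ∈ sH, FH w w' := (Finset.mul_sum _ _ _).symm
            _ = κ * b * β₁ w := by rw [hFH.row_sum hHcov w]
        rw [this]; ring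
      have h3 : ∑ v ∈ sG ×ˢ sH, (if v.1 = x₁ then (if v.2 = y₂ then 0
            else (1-κ) * (b * FH w v.2)) else 0)
          = (1-κ) * b * β₁ w - (1-κ) * b * FH w y₂ := by
        rw [sum_single_fst hx₁ (fun w' => if w' = y₂ then 0 else (1-κ) * (b * FH w w')),
          sum_ite_ne sH y₂ hy₂ (fun w' => (1-κ) * (b * FH w w'))]
        have : ∑ w' ∈ sH, (1-κ) * (b * FH w w') = (1-κ) * b * β₁ w := by
          calc ∑ w' ∈ sH, (1-κ) * (b * FH w w') = ∑ w' ∈ sH, ((1-κ) * b) * FH w w' :=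
                Finset.sum_congr rfl fun w' _ => by ring
            _ = ((1-κ) * b) * ∑ w' ∈ sH, FH w w' := (Finset.mul_sum _ _ _).symm
            _ = (1-κ) * b * β₁ w := by rw [hFH.row_sum hHcov w]
        rw [this]; ring
      have h4 : ∑ v ∈ sG ×ˢ sH, (if v.2 = y₂ then (a * FG x₁ v.1) * (b * FH w y₂) / p
            else 0) = b * FH w y₂ := by
        rw [sum_single_snd hy₂ (fun z' => (a * FG x₁ z') * (b * FH w y₂) / p)]
        calc ∑ z' ∈ sG, (a * FG x₁ z') * (b * FH w y₂) / p
            = ∑ z' ∈ sG, FG x₁ z' * (a * (b * FH w y₂) / p) :=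
              Finset.sum_congr rfl fun z' _ => by ring
          _ = (∑ z' ∈ sG, FG x₁ z') * (a * (b * FH w y₂) / p) :=
              (Finset.sum_mul _ _ _).symm
          _ = (p / a) * (a * (b * FH w y₂) / p) := by rw [hFG.row_sum hGcov x₁, hα₁x]
          _ = b * FH w y₂ := by field_simp
      rw [h2, h3, h4, hμ₁ x₁ w]
      simp only [eq_self_iff_true, true_and, if_true]
      by_cases hw : w = y₁
      · rw [if_pos hw, if_pos hw, hα₁x]
        have : a * (p / a) = p := by field_simp
        rw [this]; ring
      · rw [if_neg hw, if_neg hw]; ring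
    · -- z ≠ x₁
      have hpt : ∀ v, FP (z, w) v = if w = y₁ ∧ v.2 = y₂ then a * FG z v.1 else 0 := by
        intro v
        rw [hFPdef]
        simp only [hz, false_and, if_false, add_zero, if_neg hz]
      rw [Finset.sum_congr rfl (fun v _ => hpt v)]
      by_cases hw : w = y₁
      · have hpt2 : ∀ v ∈ sG ×ˢ sH, (if w = y₁ ∧ v.2 = y₂ then a * FG z v.1 else 0)
            = (if v.2 = y₂ then a * FG z v.1 else 0) := by
          intro v _
          simp only [hw, eq_self_iff_true, true_and]
        rw [Finset.sum_congr rfl hpt2, sum_single_snd hy₂ (fun z' => a * FG z z')]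
        rw [← Finset.mul_sum, hFG.row_sum hGcov z, hμ₁ z w]
        simp only [hw, hz, eq_self_iff_true, if_true, if_false, false_and, and_false]
        ring
      · have hpt2 : ∀ v ∈ sG ×ˢ sH, (if w = y₁ ∧ v.2 = y₂ then a * FG z v.1 else 0)
            = 0 := by
          intro v _
          simp only [hw, false_and, if_false]
        rw [Finset.sum_congr rfl hpt2, Finset.sum_const_zero, hμ₁ z w]
        simp only [hz, hw, if_false, false_and, and_false]
        ring
  -- column sums
  have hcolY : ∀ z', ∑ᶠ u, FP u (z', y₂)
      = a * (∑ᶠ z, FG z z') - a * FG x₁ z' + (a * FG x₁ z') * (b * t2) / p := by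
    intro z'
    rw [finsum_eq_finset_sum (fun u => FP u (z', y₂)) (sG ×ˢ sH)
      (fun u h => (hFPcov u _ h).1)]
    have hpt : ∀ u, FP u (z', y₂)
        = (if u.2 = y₁ then (if u.1 = x₁ then 0 else a * FG u.1 z') else 0)
        + (if u.1 = x₁ then (a * FG x₁ z') * (b * FH u.2 y₂) / p else 0) := by
      intro u
      rw [hFPdef]
      simp only [eq_self_iff_true, and_true, if_true, ite_self, add_zero, zero_add]
    rw [Finset.sum_congr rfl (fun u _ => hpt u), Finset.sum_add_distrib]
    have h1 : ∑ u ∈ sG ×ˢ sH, (if u.2 = y₁ then (if u.1 = x₁ then 0 else a * FG u.1 z')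
          else 0) = a * (∑ᶠ z, FG z z') - a * FG x₁ z' := by
      rw [sum_single_snd hy₁ (fun z => if z = x₁ then 0 else a * FG z z'),
        sum_ite_ne sG x₁ hx₁ (fun z => a * FG z z'), ← Finset.mul_sum,
        col_sum_eq FG hGcov z']
    have h4 : ∑ u ∈ sG ×ˢ sH, (if u.1 = x₁ then (a * FG x₁ z') * (b * FH u.2 y₂) / p
          else 0) = (a * FG x₁ z') * (b * t2) / p := by
      rw [sum_single_fst hx₁ (fun w => (a * FG x₁ z') * (b * FH w y₂) / p)]
      calc ∑ w ∈ sH, (a * FG x₁ z') * (b * FH w y₂) / p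
          = ∑ w ∈ sH, FH w y₂ * ((a * FG x₁ z') * b / p) :=
            Finset.sum_congr rfl fun w _ => by ring
        _ = (∑ w ∈ sH, FH w y₂) * ((a * FG x₁ z') * b / p) := (Finset.sum_mul _ _ _).symm
        _ = (a * FG x₁ z') * (b * t2) / p := by
            rw [col_sum_eq FH hHcov y₂, ← ht2def]; ring
    rw [h1, h4]
  have hcolN : ∀ z' w', w' ≠ y₂ → ∑ᶠ u, FP u (z', w')
      = (if z' = x₂ then κ * b * ∑ᶠ w, FH w w' else 0)
      + (if z' = x₁ then (1-κ) * b * ∑ᶠ w, FH w w' else 0) := by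
    intro z' w' hw'
    rw [finsum_eq_finset_sum (fun u => FP u (z', w')) (sG ×ˢ sH)
      (fun u h => (hFPcov u _ h).1)]
    have hpt : ∀ u, FP u (z', w')
        = (if u.1 = x₁ then (if z' = x₂ then κ * (b * FH u.2 w') else 0) else 0)
        + (if u.1 = x₁ then (if z' = x₁ then (1-κ) * (b * FH u.2 w') else 0) else 0) := by
      intro u
      rw [hFPdef]
      simp only [hw', and_false, if_false, if_neg hw', add_zero, zero_add, ite_and]
    rw [Finset.sum_congr rfl (fun u _ => hpt u), Finset.sum_add_distrib]
    have h2 : ∑ u ∈ sG ×ˢ sH, (if u.1 = x₁ then (if z' = x₂ then κ * (b * FH u.2 w')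
          else 0) else 0) = (if z' = x₂ then κ * b * ∑ᶠ w, FH w w' else 0) := by
      rw [sum_single_fst hx₁ (fun w => if z' = x₂ then κ * (b * FH w w') else 0),
        sum_if_const]
      by_cases hz₂ : z' = x₂
      · rw [if_pos hz₂, if_pos hz₂]
        calc ∑ w ∈ sH, κ * (b * FH w w') = ∑ w ∈ sH, (κ * b) * FH w w' :=
              Finset.sum_congr rfl fun w _ => by ring
          _ = (κ * b) * ∑ w ∈ sH, FH w w' := (Finset.mul_sum _ _ _).symm
          _ = κ * b * ∑ᶠ w, FH w w' := by rw [col_sum_eq FH hHcov w']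
      · rw [if_neg hz₂, if_neg hz₂]
    have h3 : ∑ u ∈ sG ×ˢ sH, (if u.1 = x₁ then (if z' = x₁ then (1-κ) * (b * FH u.2 w')
          else 0) else 0) = (if z' = x₁ then (1-κ) * b * ∑ᶠ w, FH w w' else 0) := by
      rw [sum_single_fst hx₁ (fun w => if z' = x₁ then (1-κ) * (b * FH w w') else 0),
        sum_if_const]
      by_cases hz₁ : z' = x₁
      · rw [if_pos hz₁, if_pos hz₁]
        calc ∑ w ∈ sH, (1-κ) * (b * FH w w') = ∑ w ∈ sH, ((1-κ) * b) * FH w w' :=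
              Finset.sum_congr rfl fun w _ => by ring
          _ = ((1-κ) * b) * ∑ w ∈ sH, FH w w' := (Finset.mul_sum _ _ _).symm
          _ = (1-κ) * b * ∑ᶠ w, FH w w' := by rw [col_sum_eq FH hHcov w']
      · rw [if_neg hz₁, if_neg hz₁]
    rw [h2, h3]
  -- the value of μ₂ in the second-column case
  have hμ₂Y : ∀ z', μ₂ (z', y₂) = a * α₂ z' := by
    intro z'
    rw [hμ₂ z' y₂]
    simp only [eq_self_iff_true, if_true, and_true]
    have : (if z' = x₂ then b * β₂ y₂ else 0) = (if z' = x₂ then p else 0) := by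
      rw [hβ₂y]
      congr 1
      field_simp
    rw [this]
    ring
  have hμ₂N : ∀ z' w', w' ≠ y₂ → μ₂ (z', w') = (if z' = x₂ then b * β₂ w' else 0) := by
    intro z' w' hw'
    rw [hμ₂ z' w']
    simp only [hw', if_false, and_false]
    ring
  have hFGmass : ∑ z ∈ sG, ∑ z' ∈ sG, FG z z' = 1 := by
    rw [Finset.sum_congr rfl (fun z _ => hFG.row_sum hGcov z), hFG.sum_mu₁ hGcov, hα₁sum]
  have hFHmass : ∑ w ∈ sH, ∑ w' ∈ sH, FH w w' = 1 := by
    rw [Finset.sum_congr rfl (fun w _ => hFH.row_sum hHcov w), hFH.sum_mu₁ hHcov, hβ₁sum]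
  refine ⟨FP, ⟨hFP_nonneg, ?_, hFProws, ?_, ?_⟩, ?_⟩
  · -- finite support
    apply Set.Finite.subset
      (((sG ×ˢ sH) ×ˢ (sG ×ˢ sH) : Finset ((VG × VH) × (VG × VH)))).finite_toSet
    rintro ⟨u, v⟩ h
    exact Finset.mem_coe.mpr (Finset.mem_product.mpr (hFPcov u v h))
  · -- cols_le
    rintro ⟨z', w'⟩ hv
    by_cases hw' : w' = y₂
    · rw [hw'] at hv ⊢
      rw [hμ₂Y z'] at hv ⊢
      rw [hcolY z']
      have hα : α₂ z' ≠ 0 := fun h => hv (by rw [h, mul_zero])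
      have hcle : (∑ᶠ z, FG z z') ≤ α₂ z' := hFG.cols_le z' hα
      have hFGnn : 0 ≤ FG x₁ z' := hFG.nonneg _ _
      have e1 : (a * FG x₁ z') * (b * t2) / p ≤ a * FG x₁ z' := by
        rw [mul_div_assoc]
        exact mul_le_of_le_one_right (mul_nonneg ha0.le hFGnn) hbt2p
      have e2 : a * (∑ᶠ z, FG z z') ≤ a * α₂ z' := mul_le_mul_of_nonneg_left hcle ha0.le
      linarith
    · rw [hμ₂N z' w' hw'] at hv ⊢
      rw [hcolN z' w' hw']
      have htn : 0 ≤ ∑ᶠ w, FH w w' := finsum_nonneg fun w => hFH.nonneg w w'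
      by_cases hz₂ : z' = x₂
      · rw [if_pos hz₂] at hv
        have hβ : β₂ w' ≠ 0 := fun h => hv (by rw [h, mul_zero])
        have ht : (∑ᶠ w, FH w w') ≤ β₂ w' := hFH.cols_le w' hβ
        have hbb : b * (∑ᶠ w, FH w w') ≤ b * β₂ w' := mul_le_mul_of_nonneg_left ht hb0.le
        have hknn : 0 ≤ (1-κ) * (b * (∑ᶠ w, FH w w')) :=
          mul_nonneg (by linarith) (mul_nonneg hb0.le htn)
        by_cases hz₁ : z' = x₁
        · rw [if_pos hz₂, if_pos hz₁, if_pos hz₂]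
          nlinarith
        · rw [if_pos hz₂, if_neg hz₁, add_zero, if_pos hz₂]
          nlinarith
      · exfalso
        rw [if_neg hz₂] at hv
        exact hv rfl
  · -- cols0
    rintro ⟨z', w'⟩ hv hfin u
    haveI hVG : Finite VG := Finite.of_injective (fun z => ((z, y₁) : VG × VH))
      (fun s t h => congrArg Prod.fst h)
    haveI hVH : Finite VH := Finite.of_injective (fun w => ((x₁, w) : VG × VH))
      (fun s t h => congrArg Prod.snd h)
    by_cases hw' : w' = y₂
    · rw [hw'] at hv ⊢
      rw [hμ₂Y z'] at hv
      have hα : α₂ z' = 0 := by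
        rcases mul_eq_zero.mp hv with h | h
        · exact absurd h (ne_of_gt ha0)
        · exact h
      have hFG0 : ∀ z, FG z z' = 0 := fun z => hFG.cols0 z' hα hVG z
      rw [hFPdef]
      simp [hFG0]
    · rw [hμ₂N z' w' hw'] at hv
      by_cases hz₂ : z' = x₂
      · rw [if_pos hz₂] at hv
        have hβ : β₂ w' = 0 := by
          rcases mul_eq_zero.mp hv with h | h
          · exact absurd h (ne_of_gt hb0)
          · exact h
        have hFH0 : ∀ w, FH w w' = 0 := fun w => hFH.cols0 w' hβ hVH w
        rw [hFPdef]
        simp [hw', hFH0]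
      · by_cases hz₁ : z' = x₁
        · have ht2e : t2 = p / b := by
            rw [ht2def, (realize_finite hFH hβ₁sum hβ₂sum).2.2 y₂, hβ₂y]
          have hκe : κ = 1 := by
            rw [hκdef]
            split
            · rfl
            · rename_i hM
              have hMe : M = 1 - p / b := by rw [hMdef, ht2e]
              rw [← hMe, div_self hM]
          rw [hFPdef]
          simp [hw', hz₂, hκe]
        · rw [hFPdef]
          simp [hw', hz₂, hz₁]
  · -- cost bound
    rw [cost_sum_eq (G.boxProd H) FP hFPcov]
    have hdG : (0:ℝ) ≤ (G.dist x₁ x₂ : ℝ) := Nat.cast_nonneg _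
    have hdH : (0:ℝ) ≤ (H.dist y₁ y₂ : ℝ) := Nat.cast_nonneg _
    have step1 : ∑ u ∈ sG ×ˢ sH, ∑ v ∈ sG ×ˢ sH, ((G.boxProd H).dist u v : ℝ) * FP u v
        ≤ ∑ u ∈ sG ×ˢ sH, ∑ v ∈ sG ×ˢ sH,
            ((G.dist u.1 v.1 : ℝ) + (H.dist u.2 v.2 : ℝ)) * FP u v := by
      refine Finset.sum_le_sum fun u _ => Finset.sum_le_sum fun v _ => ?_
      exact mul_le_mul_of_nonneg_right (boxProd_dist_le hGconn hHconn u.1 v.1 u.2 v.2)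
        (hFP_nonneg u v)
    set r1 : ℝ := ∑ z' ∈ sG, (G.dist x₁ z' : ℝ) * FG x₁ z' with hr1def
    set tc : ℝ := ∑ w ∈ sH, (H.dist w y₂ : ℝ) * FH w y₂ with htcdef
    have hr1nn : 0 ≤ r1 := Finset.sum_nonneg fun z' _ =>
      mul_nonneg (Nat.cast_nonneg _) (hFG.nonneg _ _)
    have hSig : ∑ u ∈ sG ×ˢ sH, ∑ v ∈ sG ×ˢ sH,
            ((G.dist u.1 v.1 : ℝ) + (H.dist u.2 v.2 : ℝ)) * FP u v
        = (a * cost G FG + a * (H.dist y₁ y₂ : ℝ) - a * r1 - p * (H.dist y₁ y₂ : ℝ))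
          + (κ * b * (G.dist x₁ x₂ : ℝ) * (1 - t2) + κ * b * (cost H FH - tc))
          + ((1-κ) * b * (cost H FH - tc))
          + ((a * r1) * (b * t2 / p) + b * tc) := by
      have expand : ∀ u ∈ sG ×ˢ sH, ∀ v ∈ sG ×ˢ sH,
          ((G.dist u.1 v.1 : ℝ) + (H.dist u.2 v.2 : ℝ)) * FP u v
          = (if u.2 = y₁ ∧ v.2 = y₂ then (if u.1 = x₁ then 0 else
                a * ((G.dist u.1 v.1 : ℝ) * FG u.1 v.1)
                + (a * (H.dist y₁ y₂ : ℝ)) * FG u.1 v.1) else 0)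
          + (if u.1 = x₁ ∧ v.1 = x₂ then (if v.2 = y₂ then 0 else
                (κ * b * (G.dist x₁ x₂ : ℝ)) * FH u.2 v.2
                + (κ * b) * ((H.dist u.2 v.2 : ℝ) * FH u.2 v.2)) else 0)
          + (if u.1 = x₁ ∧ v.1 = x₁ then (if v.2 = y₂ then 0 else
                ((1-κ) * b) * ((H.dist u.2 v.2 : ℝ) * FH u.2 v.2)) else 0)
          + (if u.1 = x₁ ∧ v.2 = y₂ then
                ((G.dist x₁ v.1 : ℝ) * (a * FG x₁ v.1)) * ((b * FH u.2 y₂) / p)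
                + ((H.dist u.2 y₂ : ℝ) * (b * FH u.2 y₂)) * ((a * FG x₁ v.1) / p)
              else 0) := by
        intro u _ v _
        rw [hFPdef]
        simp only
        rw [mul_add, mul_add, mul_add]
        congr 1
        · congr 1
          · congr 1
            · split
              · rename_i hc
                rw [hc.1, hc.2]
                split
                · rw [mul_zero]
                · ring
              · rw [mul_zero]
            · split
              · rename_i hc
                rw [hc.1, hc.2]
                split
                · rw [mul_zero]
                · ring
              · rw [mul_zero]
          · split
            · rename_i hc
              rw [hc.1, hc.2]
              have hd0 : (G.dist x₁ x₁ : ℝ) = 0 := by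
                rw [SimpleGraph.dist_self]
                norm_num
              rw [hd0]
              split
              · rw [mul_zero]
              · ring
            · rw [mul_zero]
        · split
          · rename_i hc
            rw [hc.1, hc.2]
            ring
          · rw [mul_zero]
      rw [Finset.sum_congr rfl (fun u hu => Finset.sum_congr rfl (fun v hv =>
        expand u hu v hv))]
      simp only [Finset.sum_add_distrib]
      rw [sum_pair_GG hy₁ hy₂ (fun z z' => if z = x₁ then 0 else
            a * ((G.dist z z' : ℝ) * FG z z') + (a * (H.dist y₁ y₂ : ℝ)) * FG z z'),
        sum_pair_HH hx₁ hx₂ (fun w w' => if w' = y₂ then 0 else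
            (κ * b * (G.dist x₁ x₂ : ℝ)) * FH w w'
            + (κ * b) * ((H.dist w w' : ℝ) * FH w w')),
        sum_pair_HH hx₁ hx₁ (fun w w' => if w' = y₂ then 0 else
            ((1-κ) * b) * ((H.dist w w' : ℝ) * FH w w')),
        sum_pair_cross hx₁ hy₂ (fun w z' =>
            ((G.dist x₁ z' : ℝ) * (a * FG x₁ z')) * ((b * FH w y₂) / p)
            + ((H.dist w y₂ : ℝ) * (b * FH w y₂)) * ((a * FG x₁ z') / p))]
      have S1 : ∑ z ∈ sG, ∑ z' ∈ sG, (if z = x₁ then 0 else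
            a * ((G.dist z z' : ℝ) * FG z z') + (a * (H.dist y₁ y₂ : ℝ)) * FG z z')
          = a * cost G FG + a * (H.dist y₁ y₂ : ℝ) - a * r1 - p * (H.dist y₁ y₂ : ℝ) := by
        have e1 : ∀ z, ∑ z' ∈ sG, (if z = x₁ then 0 else
              a * ((G.dist z z' : ℝ) * FG z z') + (a * (H.dist y₁ y₂ : ℝ)) * FG z z')
            = (if z = x₁ then 0 else ∑ z' ∈ sG,
              (a * ((G.dist z z' : ℝ) * FG z z')
                + (a * (H.dist y₁ y₂ : ℝ)) * FG z z')) := by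
          intro z
          split <;> simp
        rw [Finset.sum_congr rfl (fun z _ => e1 z),
          sum_ite_ne sG x₁ hx₁ (fun z => ∑ z' ∈ sG, (a * ((G.dist z z' : ℝ) * FG z z')
            + (a * (H.dist y₁ y₂ : ℝ)) * FG z z'))]
        have eT : ∑ z ∈ sG, ∑ z' ∈ sG, (a * ((G.dist z z' : ℝ) * FG z z')
              + (a * (H.dist y₁ y₂ : ℝ)) * FG z z')
            = a * cost G FG + a * (H.dist y₁ y₂ : ℝ) := by
          simp only [Finset.sum_add_distrib]
          rw [mul_sum_sum sG sG a (fun z z' => (G.dist z z' : ℝ) * FG z z'),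
            mul_sum_sum sG sG (a * (H.dist y₁ y₂ : ℝ)) (fun z z' => FG z z'),
            ← cost_sum_eq G FG hGcov, hFGmass]
          ring
        have eX : ∑ z' ∈ sG, (a * ((G.dist x₁ z' : ℝ) * FG x₁ z')
              + (a * (H.dist y₁ y₂ : ℝ)) * FG x₁ z')
            = a * r1 + p * (H.dist y₁ y₂ : ℝ) := by
          rw [Finset.sum_add_distrib]
          have q1 : ∑ z' ∈ sG, a * ((G.dist x₁ z' : ℝ) * FG x₁ z') = a * r1 := by
            rw [hr1def, Finset.mul_sum]
          have q2 : ∑ z' ∈ sG, (a * (H.dist y₁ y₂ : ℝ)) * FG x₁ z'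
              = p * (H.dist y₁ y₂ : ℝ) := by
            rw [← Finset.mul_sum, hFG.row_sum hGcov x₁, hα₁x]
            field_simp
          rw [q1, q2]
        rw [eT, eX]
        ring
      have S2 : ∑ w ∈ sH, ∑ w' ∈ sH, (if w' = y₂ then 0 else
            (κ * b * (G.dist x₁ x₂ : ℝ)) * FH w w'
            + (κ * b) * ((H.dist w w' : ℝ) * FH w w'))
          = κ * b * (G.dist x₁ x₂ : ℝ) * (1 - t2) + κ * b * (cost H FH - tc) := by
        rw [Finset.sum_congr rfl (fun w _ => sum_ite_ne sH y₂ hy₂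
          (fun w' => (κ * b * (G.dist x₁ x₂ : ℝ)) * FH w w'
            + (κ * b) * ((H.dist w w' : ℝ) * FH w w'))), Finset.sum_sub_distrib]
        have eT : ∑ w ∈ sH, ∑ w' ∈ sH, ((κ * b * (G.dist x₁ x₂ : ℝ)) * FH w w'
              + (κ * b) * ((H.dist w w' : ℝ) * FH w w'))
            = κ * b * (G.dist x₁ x₂ : ℝ) + κ * b * cost H FH := by
          simp only [Finset.sum_add_distrib]
          rw [mul_sum_sum sH sH (κ * b * (G.dist x₁ x₂ : ℝ)) (fun w w' => FH w w'),
            mul_sum_sum sH sH (κ * b) (fun w w' => (H.dist w w' : ℝ) * FH w w'),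
            ← cost_sum_eq H FH hHcov, hFHmass]
          ring
        have eX : ∑ w ∈ sH, ((κ * b * (G.dist x₁ x₂ : ℝ)) * FH w y₂
              + (κ * b) * ((H.dist w y₂ : ℝ) * FH w y₂))
            = κ * b * (G.dist x₁ x₂ : ℝ) * t2 + κ * b * tc := by
          rw [Finset.sum_add_distrib, ← Finset.mul_sum, ← Finset.mul_sum,
            col_sum_eq FH hHcov y₂, ← ht2def, ← htcdef]
        rw [eT, eX]
        ring
      have S3 : ∑ w ∈ sH, ∑ w' ∈ sH, (if w' = y₂ then 0 else
            ((1-κ) * b) * ((H.dist w w' : ℝ) * FH w w'))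
          = (1-κ) * b * (cost H FH - tc) := by
        rw [Finset.sum_congr rfl (fun w _ => sum_ite_ne sH y₂ hy₂
          (fun w' => ((1-κ) * b) * ((H.dist w w' : ℝ) * FH w w'))), Finset.sum_sub_distrib]
        rw [mul_sum_sum sH sH ((1-κ) * b) (fun w w' => (H.dist w w' : ℝ) * FH w w'),
          ← cost_sum_eq H FH hHcov, ← Finset.mul_sum, ← htcdef]
        ring
      have S4 : ∑ w ∈ sH, ∑ z' ∈ sG,
            (((G.dist x₁ z' : ℝ) * (a * FG x₁ z')) * ((b * FH w y₂) / p)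
            + ((H.dist w y₂ : ℝ) * (b * FH w y₂)) * ((a * FG x₁ z') / p))
          = (a * r1) * (b * t2 / p) + b * tc := by
        simp only [Finset.sum_add_distrib]
        have part1 : ∑ w ∈ sH, ∑ z' ∈ sG,
              ((G.dist x₁ z' : ℝ) * (a * FG x₁ z')) * ((b * FH w y₂) / p)
            = (a * r1) * (b * t2 / p) := by
          calc ∑ w ∈ sH, ∑ z' ∈ sG,
                ((G.dist x₁ z' : ℝ) * (a * FG x₁ z')) * ((b * FH w y₂) / p)
              = ∑ w ∈ sH, (∑ z' ∈ sG, (G.dist x₁ z' : ℝ) * FG x₁ z')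
                  * (a * (b * FH w y₂) / p) := by
                refine Finset.sum_congr rfl fun w _ => ?_
                rw [Finset.sum_mul]
                exact Finset.sum_congr rfl fun z' _ => by ring
            _ = ∑ w ∈ sH, FH w y₂ * (r1 * (a * b / p)) := by
                refine Finset.sum_congr rfl fun w _ => ?_
                rw [← hr1def]
                ring
            _ = t2 * (r1 * (a * b / p)) := by
                rw [← Finset.sum_mul, col_sum_eq FH hHcov y₂, ← ht2def]
            _ = (a * r1) * (b * t2 / p) := by ring
        have part2 : ∑ w ∈ sH, ∑ z' ∈ sG,
              ((H.dist w y₂ : ℝ) * (b * FH w y₂)) * ((a * FG x₁ z') / p)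
            = b * tc := by
          calc ∑ w ∈ sH, ∑ z' ∈ sG,
                ((H.dist w y₂ : ℝ) * (b * FH w y₂)) * ((a * FG x₁ z') / p)
              = ∑ w ∈ sH, (∑ z' ∈ sG, FG x₁ z')
                  * (((H.dist w y₂ : ℝ) * (b * FH w y₂)) * (a / p)) := by
                refine Finset.sum_congr rfl fun w _ => ?_
                rw [Finset.sum_mul]
                exact Finset.sum_congr rfl fun z' _ => by ring
            _ = ∑ w ∈ sH, ((H.dist w y₂ : ℝ) * FH w y₂) * ((p / a) * (b * (a / p))) := by
                refine Finset.sum_congr rfl fun w _ => ?_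
                rw [hFG.row_sum hGcov x₁, hα₁x]
                ring
            _ = tc * ((p / a) * (b * (a / p))) := by
                rw [← Finset.sum_mul, ← htcdef]
            _ = b * tc := by
                have : (p / a) * (b * (a / p)) = b := by
                  field_simp
                rw [this]
                ring
        rw [part1, part2]
      rw [S1, S2, S3, S4]
    rw [hSig] at step1
    have k1 : κ * b * (G.dist x₁ x₂ : ℝ) * (1 - t2) ≤ (b - p) * (G.dist x₁ x₂ : ℝ) := by
      have h0 : κ * (1 - t2) ≤ 1 - p/b := by
        have := hκM
        rw [hMdef] at this
        linarith
      calc κ * b * (G.dist x₁ x₂ : ℝ) * (1 - t2)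
          = (κ * (1 - t2)) * (b * (G.dist x₁ x₂ : ℝ)) := by ring
        _ ≤ (1 - p/b) * (b * (G.dist x₁ x₂ : ℝ)) :=
            mul_le_mul_of_nonneg_right h0 (mul_nonneg hb0.le hdG)
        _ = (b - p) * (G.dist x₁ x₂ : ℝ) := by field_simp
    have k3 : (a * r1) * (b * t2 / p) ≤ a * r1 :=
      mul_le_of_le_one_right (mul_nonneg ha0.le hr1nn) hbt2p
    linarith

/-! ### W1 helpers -/

lemma W1_le_cost {G : SimpleGraph V} {μ₁ μ₂ : V → ℝ} {π : V → V → ℝ}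
    (hπ : IsCoupling μ₁ μ₂ π) : W1 G μ₁ μ₂ ≤ cost G π := by
  apply csInf_le
  · refine ⟨0, ?_⟩
    rintro r ⟨π', hπ', rfl⟩
    exact finsum_nonneg fun u => finsum_nonneg fun v =>
      mul_nonneg (Nat.cast_nonneg _) (hπ'.1 u v)
  · exact ⟨π, hπ, rfl⟩

lemma le_W1_combo {G : SimpleGraph V} {μ₁ μ₂ : V → ℝ} {k c x : ℝ} (hk : 0 < k)
    (hne : ∃ π, IsCoupling μ₁ μ₂ π)
    (h : ∀ π, IsCoupling μ₁ μ₂ π → x ≤ k * cost G π + c) :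
    x ≤ k * W1 G μ₁ μ₂ + c := by
  obtain ⟨π₀, hπ₀⟩ := hne
  have h1 : (x - c) / k ≤ W1 G μ₁ μ₂ := by
    unfold W1
    refine le_csInf ⟨cost G π₀, π₀, hπ₀, rfl⟩ ?_
    rintro r ⟨π, hπ, rfl⟩
    rw [div_le_iff₀ hk]
    have h2 := h π hπ
    have h3 : cost G π = ∑ᶠ u, ∑ᶠ v, (G.dist u v : ℝ) * π u v := rfl
    rw [h3] at h2
    linarith
  rw [div_le_iff₀ hk] at h1
  linarith

lemma exists_coupling_prod {μ₁ μ₂ : V → ℝ} (h1 : ∑ᶠ v, μ₁ v = 1) (h2 : ∑ᶠ v, μ₂ v = 1)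
    (hn1 : ∀ v, 0 ≤ μ₁ v) (hn2 : ∀ v, 0 ≤ μ₂ v)
    (hf1 : (Function.support μ₁).Finite) (hf2 : (Function.support μ₂).Finite) :
    ∃ π, IsCoupling μ₁ μ₂ π := by
  refine ⟨fun u v => μ₁ u * μ₂ v, fun u v => mul_nonneg (hn1 u) (hn2 v), ?_, ?_⟩
  · intro u
    rw [← mul_finsum μ₂ (μ₁ u), h2, mul_one]
  · intro v
    rw [← finsum_mul μ₁ (μ₂ v), h1, one_mul]

/-! ### the decomposition identity for the product lazy measure -/

lemma mu_boxProd_eq {VG VH : Type*} [DecidableEq VG] [DecidableEq VH]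
    {G : SimpleGraph VG} {H : SimpleGraph VH}
    [G.LocallyFinite] [H.LocallyFinite] {DG DH : ℕ}
    (hDG : G.IsRegularOfDegree DG) (hDH : H.IsRegularOfDegree DH)
    {p a b : ℝ} (hp0 : 0 ≤ p) (ha0 : 0 < a) (hb0 : 0 < b)
    (ha : a = ((DG:ℝ) + p * DH) / ((DG:ℝ) + DH))
    (hb : b = (p * (DG:ℝ) + DH) / ((DG:ℝ) + DH))
    (hs : (0:ℝ) < (DG:ℝ) + (DH:ℝ))
    (x : VG) (y : VH) (z : VG) (w : VH) :
    mu (G.boxProd H) p (x, y) (z, w)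
      = (if w = y then a * mu G (p/a) x z else 0)
        + (if z = x then b * mu H (p/b) y w else 0)
        - (if z = x ∧ w = y then p else 0) := by
  classical
  have hdeg : ((G.boxProd H).degree (x, y) : ℝ) = (DG:ℝ) + (DH:ℝ) := by
    rw [SimpleGraph.degree_boxProd]
    push_cast
    rw [hDG x, hDH y]
  have key_a : a - p = (DG:ℝ) * (1 - p) / ((DG:ℝ) + DH) := by
    rw [ha]; field_simp; ring
  have key_b : b - p = (DH:ℝ) * (1 - p) / ((DG:ℝ) + DH) := by
    rw [hb]; field_simp; ring
  by_cases hz : z = x <;> by_cases hw : w = y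
  · subst hz; subst hw
    rw [mu_self, mu_self, mu_self]
    rw [if_pos rfl, if_pos rfl, if_pos ⟨rfl, rfl⟩]
    field_simp; ring
  · subst hz
    rw [if_neg hw, if_pos rfl, if_neg (fun hc : z = z ∧ w = y => hw hc.2)]
    have hne : ((z : VG), w) ≠ (z, y) := fun hc => hw (congrArg Prod.snd hc)
    by_cases hadj : H.Adj y w
    · have hDHpos : 0 < DH := by
        rw [← hDH y]
        rw [← SimpleGraph.card_neighborFinset_eq_degree]
        apply Finset.card_pos.mpr
        exact ⟨w, (SimpleGraph.mem_neighborFinset H y w).mpr hadj⟩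
      have hadj2 : (G.boxProd H).Adj (z, y) (z, w) :=
        SimpleGraph.boxProd_adj.mpr (Or.inr ⟨hadj, rfl⟩)
      rw [mu_adj _ hadj2, mu_adj _ hadj, hdeg, hDH y]
      have hDHne : ((DH:ℝ)) ≠ 0 := Nat.cast_ne_zero.mpr hDHpos.ne'
      have : b * ((1 - p/b) / (DH:ℝ)) = (b - p) / (DH:ℝ) := by
        field_simp
      rw [this, key_b]
      rw [zero_add, sub_zero]
      field_simp
    · have hnadj : ¬ (G.boxProd H).Adj (z, y) (z, w) := by
        intro hc
        rcases SimpleGraph.boxProd_adj.mp hc with ⟨h1, -⟩ | ⟨h1, -⟩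
        · exact G.irrefl h1
        · exact hadj h1
      rw [mu_eq_zero _ hne hnadj, mu_eq_zero _ hw hadj]
      ring
  · subst hw
    rw [if_pos rfl, if_neg hz, if_neg (fun hc : z = x ∧ w = w => hz hc.1)]
    have hne : ((z : VG), w) ≠ (x, w) := fun hc => hz (congrArg Prod.fst hc)
    by_cases hadj : G.Adj x z
    · have hDGpos : 0 < DG := by
        rw [← hDG x]
        rw [← SimpleGraph.card_neighborFinset_eq_degree]
        apply Finset.card_pos.mpr
        exact ⟨z, (SimpleGraph.mem_neighborFinset G x z).mpr hadj⟩
      have hadj2 : (G.boxProd H).Adj (x, w) (z, w) :=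
        SimpleGraph.boxProd_adj.mpr (Or.inl ⟨hadj, rfl⟩)
      rw [mu_adj _ hadj2, mu_adj _ hadj, hdeg, hDG x]
      have hDGne : ((DG:ℝ)) ≠ 0 := Nat.cast_ne_zero.mpr hDGpos.ne'
      have : a * ((1 - p/a) / (DG:ℝ)) = (a - p) / (DG:ℝ) := by
        field_simp
      rw [this, key_a]
      rw [add_zero, sub_zero]
      field_simp
    · have hnadj : ¬ (G.boxProd H).Adj (x, w) (z, w) := by
        intro hc
        rcases SimpleGraph.boxProd_adj.mp hc with ⟨h1, -⟩ | ⟨h1, -⟩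
        · exact hadj h1
        · exact H.irrefl h1
      rw [mu_eq_zero _ hne hnadj, mu_eq_zero _ hz hadj]
      ring
  · have hne : ((z : VG), w) ≠ (x, y) := fun hc => hz (congrArg Prod.fst hc)
    have hnadj : ¬ (G.boxProd H).Adj (x, y) (z, w) := by
      intro hc
      rcases SimpleGraph.boxProd_adj.mp hc with ⟨-, h2⟩ | ⟨-, h2⟩
      · exact hw h2.symm
      · exact hz h2.symm
    rw [mu_eq_zero _ hne hnadj, if_neg hw, if_neg hz,
      if_neg (fun hc => hz hc.1)]
    ring

/-- upper bound for the Wasserstein distance in the Cartesian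
product. -/
theorem W1_boxProd_upper {VG VH : Type*} (G : SimpleGraph VG) (H : SimpleGraph VH)
    (hG : G.Connected) (hH : H.Connected) [G.LocallyFinite] [H.LocallyFinite]
    (DG DH : ℕ) (hDG : G.IsRegularOfDegree DG) (hDH : H.IsRegularOfDegree DH)
    (x₁ x₂ : VG) (y₁ y₂ : VH) (p : ℝ) (hp : p ∈ Set.Icc (0 : ℝ) 1)
    (hl : 0 < (p * DG + DH) / (DG + DH)) (hl' : 0 < (DG + p * DH) / (DG + DH)) :
    W1 (G.boxProd H) (mu (G.boxProd H) p (x₁, y₁)) (mu (G.boxProd H) p (x₂, y₂)) ≤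
      ((DG + p * DH) / (DG + DH)) *
          W1 G (mu G (p / ((DG + p * DH) / (DG + DH))) x₁)
            (mu G (p / ((DG + p * DH) / (DG + DH))) x₂) +
        (1 - (DG + p * DH) / (DG + DH)) * (G.dist x₁ x₂ : ℝ) +
        ((p * DG + DH) / (DG + DH)) *
          W1 H (mu H (p / ((p * DG + DH) / (DG + DH))) y₁)
            (mu H (p / ((p * DG + DH) / (DG + DH))) y₂) +
        (1 - (p * DG + DH) / (DG + DH)) * (H.dist y₁ y₂ : ℝ) := by
  classical
  obtain ⟨hp0, hp1⟩ := hp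
  set a : ℝ := ((DG : ℝ) + p * (DH : ℝ)) / ((DG : ℝ) + (DH : ℝ)) with ha
  set b : ℝ := (p * (DG : ℝ) + (DH : ℝ)) / ((DG : ℝ) + (DH : ℝ)) with hb
  have ha0 : 0 < a := hl'
  have hb0 : 0 < b := hl
  have hs : (0:ℝ) < (DG:ℝ) + (DH:ℝ) := by
    by_contra hc
    push_neg at hc
    have h0 : (0:ℝ) ≤ (DG:ℝ) + (DH:ℝ) := by positivity
    have he : (DG:ℝ) + (DH:ℝ) = 0 := le_antisymm hc h0
    have : a = 0 := by rw [ha, he, div_zero]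
    exact lt_irrefl 0 (this ▸ ha0)
  have key_a : a - p = (DG:ℝ) * (1 - p) / ((DG:ℝ) + (DH:ℝ)) := by
    rw [ha]; field_simp; ring
  have key_b : b - p = (DH:ℝ) * (1 - p) / ((DG:ℝ) + (DH:ℝ)) := by
    rw [hb]; field_simp; ring
  have hpa : p ≤ a := by
    have h1 : (0:ℝ) ≤ (DG:ℝ) * (1 - p) / ((DG:ℝ) + (DH:ℝ)) :=
      div_nonneg (mul_nonneg (Nat.cast_nonneg _) (by linarith)) hs.le
    linarith
  have hpb : p ≤ b := by
    have h1 : (0:ℝ) ≤ (DH:ℝ) * (1 - p) / ((DG:ℝ) + (DH:ℝ)) :=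
      div_nonneg (mul_nonneg (Nat.cast_nonneg _) (by linarith)) hs.le
    linarith
  have hab : a + b = 1 + p := by rw [ha, hb]; field_simp; ring
  have hGsum : ∀ x : VG, ∑ᶠ z, mu G (p/a) x z = 1 := by
    intro x
    apply mu_sum
    by_cases hDG0 : DG = 0
    · right
      have hDHpos : (0:ℝ) < (DH:ℝ) := by
        rw [hDG0] at hs; simpa using hs
      have hap : a = p := by
        rw [ha, hDG0]
        push_cast
        rw [zero_add, zero_add, mul_div_assoc, div_self (ne_of_gt hDHpos), mul_one]
      have hppos : 0 < p := hap ▸ ha0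
      rw [hap]
      exact div_self hppos.ne'
    · left
      rw [hDG x]
      exact hDG0
  have hHsum : ∀ y : VH, ∑ᶠ w, mu H (p/b) y w = 1 := by
    intro y
    apply mu_sum
    by_cases hDH0 : DH = 0
    · right
      have hDGpos : (0:ℝ) < (DG:ℝ) := by
        rw [hDH0] at hs; simpa using hs
      have hbp : b = p := by
        rw [hb, hDH0]
        push_cast
        rw [add_zero, add_zero, mul_div_assoc, div_self (ne_of_gt hDGpos), mul_one]
      have hppos : 0 < p := hbp ▸ hb0
      rw [hbp]
      exact div_self hppos.ne'
    · left
      rw [hDH y]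
      exact hDH0
  have hdegP : ∀ u : VG × VH, (G.boxProd H).degree u = DG + DH := fun u => by
    rw [SimpleGraph.degree_boxProd, hDG u.1, hDH u.2]
  have hDGDH : DG + DH ≠ 0 := by
    intro hc
    have : ((DG + DH : ℕ) : ℝ) = (DG:ℝ) + (DH:ℝ) := by push_cast; ring
    rw [hc] at this
    simp at this
    linarith
  have hPsum : ∀ u : VG × VH, ∑ᶠ v, mu (G.boxProd H) p u v = 1 := fun u =>
    mu_sum _ (Or.inl (by rw [hdegP u]; exact hDGDH))
  have hqa0 : 0 ≤ p / a := div_nonneg hp0 ha0.le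
  have hqa1 : p / a ≤ 1 := (div_le_one ha0).mpr hpa
  have hqb0 : 0 ≤ p / b := div_nonneg hp0 hb0.le
  have hqb1 : p / b ≤ 1 := (div_le_one hb0).mpr hpb
  have hPconn : (G.boxProd H).Connected := hG.boxProd hH
  have hμ₁ : ∀ z w, mu (G.boxProd H) p (x₁, y₁) (z, w)
      = (if w = y₁ then a * mu G (p/a) x₁ z else 0)
        + (if z = x₁ then b * mu H (p/b) y₁ w else 0)
        - (if z = x₁ ∧ w = y₁ then p else 0) := fun z w =>
    mu_boxProd_eq hDG hDH hp0 ha0 hb0 ha hb hs x₁ y₁ z w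
  have hμ₂ : ∀ z w, mu (G.boxProd H) p (x₂, y₂) (z, w)
      = (if w = y₂ then a * mu G (p/a) x₂ z else 0)
        + (if z = x₂ then b * mu H (p/b) y₂ w else 0)
        - (if z = x₂ ∧ w = y₂ then p else 0) := fun z w =>
    mu_boxProd_eq hDG hDH hp0 ha0 hb0 ha hb hs x₂ y₂ z w
  have main : ∀ πG, IsCoupling (mu G (p/a) x₁) (mu G (p/a) x₂) πG →
      ∀ πH, IsCoupling (mu H (p/b) y₁) (mu H (p/b) y₂) πH →
      W1 (G.boxProd H) (mu (G.boxProd H) p (x₁,y₁)) (mu (G.boxProd H) p (x₂,y₂))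
        ≤ a * cost G πG + (1-a) * (G.dist x₁ x₂ : ℝ)
          + b * cost H πH + (1-b) * (H.dist y₁ y₂ : ℝ) := by
    intro πG hπG πH hπH
    obtain ⟨FG, hFG, hcG⟩ := cleanup hG (mu_support_finite G (p/a) x₁) hπG
    obtain ⟨FH, hFH, hcH⟩ := cleanup hH (mu_support_finite H (p/b) y₁) hπH
    have hcore : ∃ FP, SubPlan (mu (G.boxProd H) p (x₁,y₁))
        (mu (G.boxProd H) p (x₂,y₂)) FP ∧
        cost (G.boxProd H) FP ≤ a * cost G FG + b * cost H FH
          + (b - p) * (G.dist x₁ x₂ : ℝ) + (a - p) * (H.dist y₁ y₂ : ℝ) := by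
      rcases hp0.lt_or_eq with hppos | hpzero
      · exact core_pos hG hH x₁ x₂ y₁ y₂ hppos ha0 hb0 hpa hpb
          (hGsum x₁) (hHsum y₁) (hHsum y₂)
          (mu_self G _ x₁) (mu_self G _ x₂) (mu_self H _ y₁) (mu_self H _ y₂)
          hμ₁ hμ₂ hFG hFH
      · obtain ⟨FP, h1, h2⟩ := core_zero (μ₁ := mu (G.boxProd H) p (x₁,y₁))
          (μ₂ := mu (G.boxProd H) p (x₂,y₂)) hG hH x₁ x₂ y₁ y₂ ha0 hb0 (by linarith)
          (hGsum x₁) (hHsum y₁)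
          (by rw [mu_self, ← hpzero, zero_div])
          (by rw [mu_self, ← hpzero, zero_div])
          (fun z w => by
            have hz : (if z = x₁ ∧ w = y₁ then p else 0) = 0 := by
              rw [← hpzero]; simp
            rw [hμ₁ z w, hz, sub_zero])
          (fun z w => by
            have hz : (if z = x₂ ∧ w = y₂ then p else 0) = 0 := by
              rw [← hpzero]; simp
            rw [hμ₂ z w, hz, sub_zero])
          hFG hFH
        refine ⟨FP, h1, ?_⟩
        have e1 : b - p = b := by rw [← hpzero]; ring
        have e2 : a - p = a := by rw [← hpzero]; ring
        rw [e1, e2]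
        exact h2
    obtain ⟨FP, hFP, hFPcost⟩ := hcore
    have hWle : W1 (G.boxProd H) (mu (G.boxProd H) p (x₁,y₁))
        (mu (G.boxProd H) p (x₂,y₂)) ≤ cost (G.boxProd H) FP := by
      by_cases hfin : Finite (VG × VH)
      · haveI := hfin
        exact W1_le_cost (realize_finite hFP (hPsum (x₁,y₁)) (hPsum (x₂,y₂)))
      · haveI : Infinite (VG × VH) := not_finite_iff_infinite.mp hfin
        obtain ⟨πP, hπP, hcP⟩ := realize_infinite hPconn
          (mu_support_finite _ p (x₁,y₁)) (mu_support_finite _ p (x₂,y₂))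
          (mu_nonneg _ hp0 hp1 (x₂,y₂)) hFP
        calc W1 (G.boxProd H) (mu (G.boxProd H) p (x₁,y₁)) (mu (G.boxProd H) p (x₂,y₂))
            ≤ cost (G.boxProd H) πP := W1_le_cost hπP
          _ = cost (G.boxProd H) FP := hcP
    have hmG : a * cost G FG ≤ a * cost G πG := mul_le_mul_of_nonneg_left hcG ha0.le
    have hmH : b * cost H FH ≤ b * cost H πH := mul_le_mul_of_nonneg_left hcH hb0.le
    have e1 : b - p = 1 - a := by linarith
    have e2 : a - p = 1 - b := by linarith
    rw [e1, e2] at hFPcost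
    linarith
  have hneG : ∃ π, IsCoupling (mu G (p/a) x₁) (mu G (p/a) x₂) π :=
    exists_coupling_prod (hGsum x₁) (hGsum x₂)
      (mu_nonneg G hqa0 hqa1 x₁) (mu_nonneg G hqa0 hqa1 x₂)
      (mu_support_finite G _ x₁) (mu_support_finite G _ x₂)
  have hneH : ∃ π, IsCoupling (mu H (p/b) y₁) (mu H (p/b) y₂) π :=
    exists_coupling_prod (hHsum y₁) (hHsum y₂)
      (mu_nonneg H hqb0 hqb1 y₁) (mu_nonneg H hqb0 hqb1 y₂)
      (mu_support_finite H _ y₁) (mu_support_finite H _ y₂)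
  have final : W1 (G.boxProd H) (mu (G.boxProd H) p (x₁,y₁)) (mu (G.boxProd H) p (x₂,y₂))
      ≤ a * W1 G (mu G (p/a) x₁) (mu G (p/a) x₂)
        + ((1-a) * (G.dist x₁ x₂ : ℝ)
          + (b * W1 H (mu H (p/b) y₁) (mu H (p/b) y₂) + (1-b) * (H.dist y₁ y₂ : ℝ))) := by
    apply le_W1_combo ha0 hneG
    intro πG hπG
    have inner : W1 (G.boxProd H) (mu (G.boxProd H) p (x₁,y₁)) (mu (G.boxProd H) p (x₂,y₂))
        ≤ b * W1 H (mu H (p/b) y₁) (mu H (p/b) y₂)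
          + (a * cost G πG + ((1-a) * (G.dist x₁ x₂ : ℝ) + (1-b) * (H.dist y₁ y₂ : ℝ))) := by
      apply le_W1_combo hb0 hneH
      intro πH hπH
      have h := main πG hπG πH hπH
      linarith
    linarith
  linarith [final]


end OllivierLong
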